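/- arXiv:2104.06570 — 14 statements merged into one kernel-verified Lean document; each statement's English description precedes it below -/
import Mathlib

section
/- Let (E, ρ) be a q-polymatroid over a finite field 𝔽_q and let ⟨·,·⟩ be a nondegenerate symmetric bilinear form on E. Define ρ*(V) = dim V + ρ(V^⊥) − ρ(E) for every subspace V of E. Then ρ* is a q-rank function on E (so (E, ρ*) is a q-polymatroid), and the bidual equals the original: (ρ*)*(V) = ρ(V) for all subspaces V of E. -/
open Module

/-- Let `(E, ρ)` be a `q`-polymatroid over a finite field and `B` a
nondegenerate symmetric bilinear form on `E`. Define `ρ*(V) = dim V + ρ(V^⊥) − ρ(E)`.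
Then `ρ*` is a `q`-rank function on `E` and `(ρ*)* = ρ`. -/
theorem dual_rank_function_is_rank_function_and_bidual
    {F E : Type} [Field F] [Fintype F] [AddCommGroup E] [Module F E]
    [FiniteDimensional F E]
    (B : E →ₗ[F] E →ₗ[F] F)
    (hsymm : ∀ x y : E, B x y = B y x)
    (hnondeg : ∀ x : E, (∀ y : E, B x y = 0) → x = 0)
    (ρ : Submodule F E → ℚ)
    (hnonneg : ∀ V : Submodule F E, 0 ≤ ρ V)
    (hR1 : ∀ V : Submodule F E, ρ V ≤ finrank F V)
    (hR2 : ∀ V W : Submodule F E, V ≤ W → ρ V ≤ ρ W)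
    (hR3 : ∀ V W : Submodule F E, ρ (V ⊔ W) + ρ (V ⊓ W) ≤ ρ V + ρ W)
    (ρd : Submodule F E → ℚ)
    (hρd : ∀ V : Submodule F E,
      ρd V = (finrank F V : ℚ) + ρ (LinearMap.BilinForm.orthogonal B V) - ρ ⊤) :
    (∀ V : Submodule F E, 0 ≤ ρd V) ∧
    (∀ V : Submodule F E, ρd V ≤ finrank F V) ∧
    (∀ V W : Submodule F E, V ≤ W → ρd V ≤ ρd W) ∧
    (∀ V W : Submodule F E, ρd (V ⊔ W) + ρd (V ⊓ W) ≤ ρd V + ρd W) ∧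
    (∀ V : Submodule F E,
      (finrank F V : ℚ) + ρd (LinearMap.BilinForm.orthogonal B V) - ρd ⊤ = ρ V) := by
  have hrefl : B.IsRefl := fun x y h => by rw [hsymm]; exact h
  have hnd : LinearMap.BilinForm.Nondegenerate B :=
    ⟨fun x h => hnondeg x h, fun y h => hnondeg y (fun x => by rw [hsymm]; exact h x)⟩
  -- dimension of orthogonal complement
  have hdim : ∀ V : Submodule F E,
      (finrank F V : ℚ) + finrank F (LinearMap.BilinForm.orthogonal B V) = finrank F E := by
    intro V
    have h := LinearMap.BilinForm.finrank_orthogonal hnd V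
    have hle : finrank F V ≤ finrank F E := Submodule.finrank_le V
    have : finrank F V + finrank F (LinearMap.BilinForm.orthogonal B V) = finrank F E := by
      omega
    exact_mod_cast congrArg (Nat.cast : ℕ → ℚ) this
  have horthorth : ∀ V : Submodule F E,
      LinearMap.BilinForm.orthogonal B (LinearMap.BilinForm.orthogonal B V) = V :=
    LinearMap.BilinForm.orthogonal_orthogonal hnd hrefl
  -- key submodular-type bound: ρ Y ≤ ρ X + (dim Y - dim X) for X ≤ Y
  have rho_le : ∀ X Y : Submodule F E, X ≤ Y →
      ρ Y ≤ ρ X + ((finrank F Y : ℚ) - finrank F X) := by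
    intro X Y hXY
    obtain ⟨q, hq⟩ := Submodule.exists_isCompl (Submodule.comap Y.subtype X)
    set U : Submodule F E := q.map Y.subtype with hU
    have hsup : X ⊔ U = Y := by
      have := congrArg (Submodule.map Y.subtype) (codisjoint_iff.mp hq.codisjoint)
      rw [Submodule.map_sup, Submodule.map_comap_subtype, Submodule.map_subtype_top,
        inf_eq_right.mpr hXY] at this
      exact this
    have hdX : finrank F (Submodule.comap Y.subtype X) = finrank F X :=
      (Submodule.comapSubtypeEquivOfLe hXY).finrank_eq
    have hdU : finrank F U = finrank F q := Submodule.finrank_map_subtype_eq Y q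
    have hdsum : finrank F (Submodule.comap Y.subtype X) + finrank F q = finrank F Y :=
      Submodule.finrank_add_eq_of_isCompl hq
    have h3 := hR3 X U
    have h1 := hR1 U
    have h0 := hnonneg (X ⊓ U)
    rw [hsup] at h3
    have : (finrank F U : ℚ) = (finrank F Y : ℚ) - finrank F X := by
      have : finrank F X + finrank F U = finrank F Y := by omega
      have := congrArg (Nat.cast : ℕ → ℚ) this
      push_cast at this
      linarith
    linarith
  have hbot : ρ ⊥ = 0 := le_antisymm (by simpa using hR1 ⊥) (hnonneg ⊥)
  have htoporth : LinearMap.BilinForm.orthogonal B ⊤ = ⊥ :=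
    LinearMap.BilinForm.orthogonal_top_eq_bot hnd
  -- orthogonal of sup is inf of orthogonals
  have horthsup : ∀ V W : Submodule F E,
      LinearMap.BilinForm.orthogonal B (V ⊔ W)
        = LinearMap.BilinForm.orthogonal B V ⊓ LinearMap.BilinForm.orthogonal B W := by
    intro V W
    apply le_antisymm
    · exact le_inf (LinearMap.BilinForm.orthogonal_le le_sup_left)
        (LinearMap.BilinForm.orthogonal_le le_sup_right)
    · intro x hx
      intro n hn
      rcases Submodule.mem_sup.mp hn with ⟨v, hv, w, hw, rfl⟩
      have h1 : B v x = 0 := hx.1 v hv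
      have h2 : B w x = 0 := hx.2 w hw
      simp [LinearMap.BilinForm.IsOrtho, map_add, h1, h2]
  have horthinf : ∀ V W : Submodule F E,
      LinearMap.BilinForm.orthogonal B (V ⊓ W)
        = LinearMap.BilinForm.orthogonal B V ⊔ LinearMap.BilinForm.orthogonal B W := by
    intro V W
    have := horthsup (LinearMap.BilinForm.orthogonal B V) (LinearMap.BilinForm.orthogonal B W)
    rw [horthorth, horthorth] at this
    calc LinearMap.BilinForm.orthogonal B (V ⊓ W)
        = LinearMap.BilinForm.orthogonal B
            (LinearMap.BilinForm.orthogonal B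
              (LinearMap.BilinForm.orthogonal B V ⊔ LinearMap.BilinForm.orthogonal B W)) := by
          rw [this]
      _ = _ := horthorth _
  refine ⟨?_, ?_, ?_, ?_, ?_⟩
  · intro V
    rw [hρd]
    have h := rho_le (LinearMap.BilinForm.orthogonal B V) ⊤ le_top
    have hd := hdim V
    simp only [finrank_top] at h
    linarith
  · intro V
    rw [hρd]
    have := hR2 (LinearMap.BilinForm.orthogonal B V) ⊤ le_top
    linarith
  · intro V W hVW
    rw [hρd, hρd]
    have horth : LinearMap.BilinForm.orthogonal B W ≤ LinearMap.BilinForm.orthogonal B V :=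
      LinearMap.BilinForm.orthogonal_le hVW
    have h := rho_le (LinearMap.BilinForm.orthogonal B W)
      (LinearMap.BilinForm.orthogonal B V) horth
    have hdV := hdim V
    have hdW := hdim W
    linarith
  · intro V W
    rw [hρd, hρd, hρd, hρd, horthsup, horthinf]
    have h := hR3 (LinearMap.BilinForm.orthogonal B V) (LinearMap.BilinForm.orthogonal B W)
    have hd : finrank F ↥(V ⊔ W) + finrank F ↥(V ⊓ W) = finrank F V + finrank F W :=
      Submodule.finrank_sup_add_finrank_inf_eq V W
    have hd' : (finrank F ↥(V ⊔ W) : ℚ) + finrank F ↥(V ⊓ W)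
        = (finrank F V : ℚ) + finrank F W := by exact_mod_cast hd
    linarith
  · intro V
    rw [hρd, hρd, horthorth, htoporth, hbot]
    have hd := hdim V
    simp only [finrank_top]
    linarith
end

section
/- Let (E, ρ) be a q-polymatroid over a finite field 𝔽_q and let ⟨·,·⟩ and ⟨⟨·,·⟩⟩ be two nondegenerate symmetric bilinear forms on E, with dual rank functions ρ*(V) = dim V + ρ(V^⊥) − ρ(E) and ρ^̂*(V) = dim V + ρ(V^⊥̂) − ρ(E), where ⊥ and ⊥̂ denote the respective orthogonal operations. Then the two dual q-polymatroids are equivalent: there exists an 𝔽_q-linear automorphism φ of E such that ρ*(φ(V)) = ρ^̂*(V) for all subspaces V of E. -/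
open Module

/-- Two nondegenerate symmetric bilinear forms on `E` yield equivalent
dual `q`-polymatroids: there is a linear automorphism `φ` of `E` with
`ρ*(φ(V)) = ρ^̂*(V)` for all subspaces `V`. -/
theorem dual_qPolymatroids_equivalent_for_two_forms
    {F E : Type} [Field F] [Fintype F] [AddCommGroup E] [Module F E]
    [FiniteDimensional F E]
    (B B' : E →ₗ[F] E →ₗ[F] F)
    (hsymm : ∀ x y : E, B x y = B y x)
    (hnondeg : ∀ x : E, (∀ y : E, B x y = 0) → x = 0)
    (hsymm' : ∀ x y : E, B' x y = B' y x)
    (hnondeg' : ∀ x : E, (∀ y : E, B' x y = 0) → x = 0)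
    (ρ : Submodule F E → ℚ)
    (hnonneg : ∀ V : Submodule F E, 0 ≤ ρ V)
    (hR1 : ∀ V : Submodule F E, ρ V ≤ finrank F V)
    (hR2 : ∀ V W : Submodule F E, V ≤ W → ρ V ≤ ρ W)
    (hR3 : ∀ V W : Submodule F E, ρ (V ⊔ W) + ρ (V ⊓ W) ≤ ρ V + ρ W)
    (ρd ρd' : Submodule F E → ℚ)
    (hρd : ∀ V : Submodule F E,
      ρd V = (finrank F V : ℚ) + ρ (LinearMap.BilinForm.orthogonal B V) - ρ ⊤)
    (hρd' : ∀ V : Submodule F E,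
      ρd' V = (finrank F V : ℚ) + ρ (LinearMap.BilinForm.orthogonal B' V) - ρ ⊤) :
    ∃ φ : E ≃ₗ[F] E, ∀ V : Submodule F E,
      ρd (Submodule.map (φ : E →ₗ[F] E) V) = ρd' V := by
  have hB : LinearMap.BilinForm.Nondegenerate B :=
    ⟨fun x hx => hnondeg x hx, fun y hy => hnondeg y (fun x => (hsymm y x).trans (hy x))⟩
  have hB' : LinearMap.BilinForm.Nondegenerate B' :=
    ⟨fun x hx => hnondeg' x hx, fun y hy => hnondeg' y (fun x => (hsymm' y x).trans (hy x))⟩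
  refine ⟨(LinearMap.BilinForm.toDual B' hB').trans
    (LinearMap.BilinForm.toDual B hB).symm, fun V => ?_⟩
  set φ : E ≃ₗ[F] E := (LinearMap.BilinForm.toDual B' hB').trans
    (LinearMap.BilinForm.toDual B hB).symm with hφ
  have key : ∀ x y : E, B (φ x) y = B' x y := by
    intro x y
    have : B ((LinearMap.BilinForm.toDual B hB).symm
        (LinearMap.BilinForm.toDual B' hB' x)) y =
        (LinearMap.BilinForm.toDual B' hB' x) y :=
      LinearMap.BilinForm.apply_toDual_symm_apply (hB := hB) _ _
    simpa [hφ, LinearMap.BilinForm.toDual_def] using this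
  have horth : LinearMap.BilinForm.orthogonal B (Submodule.map (φ : E →ₗ[F] E) V)
      = LinearMap.BilinForm.orthogonal B' V := by
    ext x
    simp only [LinearMap.BilinForm.mem_orthogonal_iff, Submodule.mem_map]
    constructor
    · intro h v hv
      have := h (φ v) ⟨v, hv, rfl⟩
      simpa [LinearMap.BilinForm.IsOrtho, key] using this
    · rintro h y ⟨v, hv, rfl⟩
      have := h v hv
      simpa [LinearMap.BilinForm.IsOrtho, key] using this
  have hdim : finrank F (Submodule.map (φ : E →ₗ[F] E) V) = finrank F V :=
    (Submodule.equivMapOfInjective _ φ.injective V).symm.finrank_eq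
  rw [hρd, hρd', horth, hdim]
end

section
/- Let C be a nonzero rank-metric code in 𝔽_q^{n×m} with rank distance d = d_rk(C), and let V be a subspace of 𝔽_q^n of dimension v with v ≥ d − 1. Then dim C(V,c) ≤ max{m, v}·(min{m, v} − d + 1). -/
open Module

/-- The submodule of `n × m` matrices whose column space is contained in `V`. -/
def colspLE {F : Type} [Field F] {n m : ℕ} (V : Submodule F (Fin n → F)) :
    Submodule F (Matrix (Fin n) (Fin m) F) where
  carrier := {M | ∀ x : Fin m → F, M.mulVec x ∈ V}
  add_mem' := by
    intro M N hM hN x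
    rw [Set.mem_setOf_eq] at *
    rw [Matrix.add_mulVec]
    exact V.add_mem (hM x) (hN x)
  zero_mem' := by
    intro x
    simp only [Set.mem_setOf_eq, Matrix.zero_mulVec]
    exact V.zero_mem
  smul_mem' := by
    intro c M hM x
    rw [Set.mem_setOf_eq] at *
    rw [Matrix.smul_mulVec]
    exact V.smul_mem c (hM x)

/-- The shortening `C(V, c) = {M ∈ C : colsp(M) ⊆ V}`. -/
def codeC {F : Type} [Field F] {n m : ℕ} (C : Submodule F (Matrix (Fin n) (Fin m) F))
    (V : Submodule F (Fin n → F)) : Submodule F (Matrix (Fin n) (Fin m) F) :=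
  C ⊓ colspLE V

section Aux
open Matrix

variable {F : Type} [Field F]

/-- A nonzero matrix over a field has rank at least 1. -/
lemma one_le_rank_of_ne_zero {a b : ℕ} {M : Matrix (Fin a) (Fin b) F} (h : M ≠ 0) :
    1 ≤ M.rank := by
  by_contra hlt
  have h0 : M.rank = 0 := by omega
  rw [Matrix.rank_eq_finrank_span_cols] at h0
  have hbot : Submodule.span F (Set.range Mᵀ) = ⊥ := by
    have : FiniteDimensional F (Submodule.span F (Set.range Mᵀ)) := inferInstance
    exact Submodule.finrank_eq_zero.mp h0
  apply h
  ext i j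
  have : Mᵀ j = 0 := by
    have hmem : Mᵀ j ∈ Submodule.span F (Set.range Mᵀ) :=
      Submodule.subset_span ⟨j, rfl⟩
    rw [hbot] at hmem
    simpa using hmem
  simpa using congrFun this i

/-- If all columns with index `< b - k` vanish, the rank is at most `k`. -/
lemma rank_le_of_zero_cols {a b k : ℕ} (hk : k ≤ b) (A : Matrix (Fin a) (Fin b) F)
    (h : ∀ j : Fin b, (j : ℕ) < b - k → Aᵀ j = 0) : A.rank ≤ k := by
  classical
  rw [Matrix.rank_eq_finrank_span_cols]
  set g : Fin k → (Fin a → F) := fun t => Aᵀ ⟨b - k + t, by omega⟩ with hg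
  have hsub : Set.range Aᵀ ⊆ insert 0 (Set.range g) := by
    rintro x ⟨j, rfl⟩
    by_cases hj : (j : ℕ) < b - k
    · exact Or.inl (h j hj)
    · refine Or.inr ⟨⟨(j : ℕ) - (b - k), by omega⟩, ?_⟩
      simp only [hg]
      exact congrArg Aᵀ (Fin.ext (by simp only [Fin.val_mk]; omega))
  calc finrank F (Submodule.span F (Set.range Aᵀ))
      ≤ finrank F (Submodule.span F (Set.range g)) := by
        apply Submodule.finrank_mono
        conv_rhs => rw [← Submodule.span_insert_zero]
        exact Submodule.span_mono hsub
    _ ≤ Fintype.card (Fin k) := finrank_range_le_card g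
    _ = k := Fintype.card_fin k

/-- Singleton bound, column-deletion form. -/
lemma singleton_core {a b d : ℕ} (hdb : d - 1 ≤ b)
    (W : Submodule F (Matrix (Fin a) (Fin b) F))
    (hW : ∀ M ∈ W, M ≠ 0 → d ≤ M.rank) :
    finrank F W ≤ a * (b - (d - 1)) := by
  classical
  set ψ : Matrix (Fin a) (Fin b) F →ₗ[F] Matrix (Fin a) (Fin (b - (d - 1))) F :=
    { toFun := fun M => M.submatrix id (Fin.castLE (Nat.sub_le b (d - 1)))
      map_add' := fun M N => rfl
      map_smul' := fun c M => rfl } with hψ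
  have hinj : Function.Injective (ψ.comp W.subtype) := by
    rw [← LinearMap.ker_eq_bot]
    apply LinearMap.ker_eq_bot'.mpr
    intro M hM0
    by_contra hne
    have hvne : (M : Matrix (Fin a) (Fin b) F) ≠ 0 := by
      simpa [Submodule.coe_eq_zero] using hne
    have hd : d ≤ (M : Matrix (Fin a) (Fin b) F).rank := hW _ M.2 hvne
    have hr : (M : Matrix (Fin a) (Fin b) F).rank ≤ d - 1 := by
      apply rank_le_of_zero_cols hdb
      intro j hj
      funext i
      have hj' : (j : ℕ) < b - (d - 1) := hj
      have := congrFun (congrFun hM0 i) (⟨(j : ℕ), hj'⟩ : Fin (b - (d - 1)))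
      simpa [hψ, Matrix.submatrix, Fin.castLE] using this
    have h1 : 1 ≤ (M : Matrix (Fin a) (Fin b) F).rank := one_le_rank_of_ne_zero hvne
    omega
  have hle := LinearMap.finrank_le_finrank_of_injective hinj
  calc finrank F W ≤ finrank F (Matrix (Fin a) (Fin (b - (d - 1))) F) := hle
    _ = a * (b - (d - 1)) := by
        rw [Module.finrank_matrix]
        simp

/-- Singleton bound, row-deletion form (via transpose). -/
lemma singleton_core' {a b d : ℕ} (hda : d - 1 ≤ a)
    (W : Submodule F (Matrix (Fin a) (Fin b) F))
    (hW : ∀ M ∈ W, M ≠ 0 → d ≤ M.rank) :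
    finrank F W ≤ b * (a - (d - 1)) := by
  classical
  set e : Matrix (Fin a) (Fin b) F →ₗ[F] Matrix (Fin b) (Fin a) F :=
    (Matrix.transposeLinearEquiv (Fin a) (Fin b) F F).toLinearMap with he
  have := singleton_core (F := F) (a := b) (b := a) (d := d) hda (W.map e) ?_
  · rwa [LinearEquiv.finrank_map_eq (Matrix.transposeLinearEquiv (Fin a) (Fin b) F F) W] at this
  · rintro N ⟨M, hM, rfl⟩ hne
    have hMne : M ≠ 0 := by
      rintro rfl
      exact hne (map_zero e)
    have : (e M) = Mᵀ := rfl
    rw [this, Matrix.rank_transpose]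
    exact hW M hM hMne

end Aux

/-- Let `C ≤ 𝔽_q^{n×m}` be a nonzero rank-metric code with rank
distance `d` and `V ≤ 𝔽_q^n` a subspace of dimension `v ≥ d − 1`. Then
`dim C(V,c) ≤ max{m, v}·(min{m, v} − d + 1)`. -/
theorem finrank_codeC_le
    {F : Type} [Field F] [Fintype F] {n m : ℕ}
    (C : Submodule F (Matrix (Fin n) (Fin m) F)) (hC : C ≠ ⊥)
    (d : ℕ)
    (hd : IsLeast {r : ℕ | ∃ M ∈ C, M ≠ 0 ∧ M.rank = r} d)
    (V : Submodule F (Fin n → F)) (v : ℕ)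
    (hv : finrank F V = v) (hvd : d - 1 ≤ v) :
    (finrank F (codeC C V) : ℤ) ≤ (max m v : ℤ) * ((min m v : ℤ) - d + 1) := by
  classical
  obtain ⟨⟨M0, hM0C, hM0ne, hM0rank⟩, hdlb⟩ := hd
  have hd1 : 1 ≤ d := hM0rank ▸ one_le_rank_of_ne_zero hM0ne
  have hdm : d ≤ m := hM0rank ▸ Matrix.rank_le_width M0
  let B : Basis (Fin v) F V := Module.finBasisOfFinrankEq F V hv
  have colmem : ∀ (M : codeC C V) (j : Fin m),
      (fun i => (M : Matrix (Fin n) (Fin m) F) i j) ∈ V := by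
    intro M j
    have h2 : (M : Matrix (Fin n) (Fin m) F) ∈ colspLE V := M.2.2
    have := h2 (Pi.single j 1)
    have h3 : (M : Matrix (Fin n) (Fin m) F).col j ∈ V := by
      simpa [Matrix.mulVec_single] using this
    exact h3
  let cvec : codeC C V → Fin m → V := fun M j => ⟨_, colmem M j⟩
  have cvec_add : ∀ (M N : codeC C V) (j : Fin m),
      cvec (M + N) j = cvec M j + cvec N j := fun M N j => Subtype.ext rfl
  have cvec_smul : ∀ (c : F) (M : codeC C V) (j : Fin m),
      cvec (c • M) j = c • cvec M j := fun c M j => Subtype.ext rfl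
  let φ : codeC C V →ₗ[F] Matrix (Fin v) (Fin m) F :=
    { toFun := fun M => Matrix.of fun i j => B.repr (cvec M j) i
      map_add' := by
        intro M N
        ext i j
        simp [cvec_add]
      map_smul' := by
        intro c M
        ext i j
        simp [cvec_smul] }
  have hφ : Function.Injective φ := by
    rw [← LinearMap.ker_eq_bot]
    apply LinearMap.ker_eq_bot'.mpr
    intro M hM
    have hz : ∀ j, cvec M j = 0 := by
      intro j
      have hrepr : B.repr (cvec M j) = 0 := by
        ext i
        have := congrFun (congrFun hM i) j
        simpa [φ] using this
      exact (LinearEquiv.map_eq_zero_iff B.repr).mp hrepr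
    apply Subtype.ext
    ext i j
    have := congrArg Subtype.val (hz j)
    exact congrFun this i
  let Bmat : Matrix (Fin n) (Fin v) F := fun i k => (B k : Fin n → F) i
  have hfact : ∀ M : codeC C V,
      (M : Matrix (Fin n) (Fin m) F) = Bmat * φ M := by
    intro M
    ext i j
    have hsum := B.sum_repr (cvec M j)
    have h := congrFun (congrArg Subtype.val hsum) i
    simp only [AddSubmonoidClass.coe_finset_sum, SetLike.val_smul, Finset.sum_apply,
      Pi.smul_apply, smul_eq_mul] at h
    rw [Matrix.mul_apply]
    rw [show (M : Matrix (Fin n) (Fin m) F) i j = (cvec M j : Fin n → F) i from rfl, ← h]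
    exact Finset.sum_congr rfl fun k _ => mul_comm _ _
  have hrank : ∀ N ∈ LinearMap.range φ, N ≠ 0 → d ≤ N.rank := by
    rintro N ⟨M, rfl⟩ hne
    have hMne : (M : Matrix (Fin n) (Fin m) F) ≠ 0 := by
      intro h0
      exact hne (by rw [show M = 0 from Subtype.ext h0, map_zero])
    have h1 : d ≤ (M : Matrix (Fin n) (Fin m) F).rank :=
      hdlb ⟨(M : Matrix (Fin n) (Fin m) F), M.2.1, hMne, rfl⟩
    calc d ≤ (M : Matrix (Fin n) (Fin m) F).rank := h1
      _ = (Bmat * φ M).rank := by rw [← hfact M]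
      _ ≤ (φ M).rank := Matrix.rank_mul_le_right _ _
  have heq : finrank F (codeC C V) = finrank F (LinearMap.range φ) :=
    (LinearMap.finrank_range_of_inj hφ).symm
  rcases le_total m v with hmv | hvm
  · have hle := singleton_core (d := d) (by omega) (LinearMap.range φ) hrank
    have e1 : ((m - (d - 1) : ℕ) : ℤ) = (m : ℤ) - d + 1 := by omega
    rw [heq, max_eq_right (by exact_mod_cast hmv), min_eq_left (by exact_mod_cast hmv)]
    calc (finrank F (LinearMap.range φ) : ℤ) ≤ (v : ℤ) * ((m - (d - 1) : ℕ) : ℤ) := by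
          exact_mod_cast hle
      _ = (v : ℤ) * ((m : ℤ) - d + 1) := by rw [e1]
  · have hle := singleton_core' (d := d) (by omega) (LinearMap.range φ) hrank
    have e1 : ((v - (d - 1) : ℕ) : ℤ) = (v : ℤ) - d + 1 := by omega
    rw [heq, max_eq_left (by exact_mod_cast hvm), min_eq_right (by exact_mod_cast hvm)]
    calc (finrank F (LinearMap.range φ) : ℤ) ≤ (m : ℤ) * ((v - (d - 1) : ℕ) : ℤ) := by
          exact_mod_cast hle
      _ = (m : ℤ) * ((v : ℤ) - d + 1) := by rw [e1]
end

section
/- Let m ≤ n and let C ≤ 𝔽_q^{n×m} be an MRD code with rank distance d, i.e., dim C = n(m − d + 1). Let ρ_c be the column rank function of C and let V ≤ 𝔽_q^n be a subspace of dimension v. Then: ρ_c(V) = v if v ≤ m − d + 1; ρ_c(V) = n(m − d + 1)/m if v ≥ n − d + 1; and ρ_c(V) ≥ max{1, v/m}·(m − d + 1) if m − d + 2 ≤ v ≤ n − d. -/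
open Module

/-- The orthogonal of `V ≤ 𝔽^n` with respect to the standard dot product. -/
def dotPerp {F : Type} [Field F] {n : ℕ} (V : Submodule F (Fin n → F)) :
    Submodule F (Fin n → F) where
  carrier := {w | ∀ v ∈ V, dotProduct v w = 0}
  add_mem' := by
    intro a b ha hb v hv
    rw [dotProduct_add, ha v hv, hb v hv, add_zero]
  zero_mem' := by
    intro v hv
    simp
  smul_mem' := by
    intro c a ha v hv
    rw [dotProduct_smul, ha v hv, smul_zero]

/-- The column rank function `ρ_c(V) = (dim C − dim C(V^⊥, c))/m` of a rank-metric code. -/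
noncomputable def rhoC {F : Type} [Field F] {n m : ℕ}
    (C : Submodule F (Matrix (Fin n) (Fin m) F)) (V : Submodule F (Fin n → F)) : ℚ :=
  ((Module.finrank F C : ℚ) - (Module.finrank F (codeC C (dotPerp V)) : ℚ)) / m




variable {F : Type} [Field F] {n m : ℕ}

/-- restriction map as a linear map in M -/
noncomputable def resT (T : Submodule F (Fin m → F)) :
    Matrix (Fin n) (Fin m) F →ₗ[F] (T →ₗ[F] (Fin n → F)) where
  toFun M := M.mulVecLin ∘ₗ T.subtype
  map_add' M N := by ext t; simp [Matrix.add_mulVec]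
  map_smul' c M := by ext t; simp [Matrix.smul_mulVec]

theorem resT_apply (T : Submodule F (Fin m → F)) (M : Matrix (Fin n) (Fin m) F) (t : T) :
    resT T M t = M.mulVec t := rfl

theorem rank_le_of_annihilates {M : Matrix (Fin n) (Fin m) F} {T : Submodule F (Fin m → F)}
    (h : ∀ t ∈ T, M.mulVec t = 0) : M.rank + finrank F T ≤ m := by
  have hT : T ≤ LinearMap.ker M.mulVecLin := by
    intro t ht
    simpa [Matrix.mulVecLin] using h t ht
  have h1 := LinearMap.finrank_range_add_finrank_ker M.mulVecLin
  have h2 : finrank F T ≤ finrank F (LinearMap.ker M.mulVecLin) := Submodule.finrank_mono hT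
  have h3 : M.rank = finrank F (LinearMap.range M.mulVecLin) := rfl
  rw [finrank_pi, Fintype.card_fin] at h1
  omega

section Core
variable (C : Submodule F (Matrix (Fin n) (Fin m) F)) {d : ℕ}
  (hd : IsLeast {r : ℕ | ∃ M ∈ C, M ≠ 0 ∧ M.rank = r} d)

include hd

theorem d_le_rank {M : Matrix (Fin n) (Fin m) F} (hM : M ∈ C) (hM0 : M ≠ 0) : d ≤ M.rank :=
  hd.2 ⟨M, hM, hM0, rfl⟩

theorem d_pos (hC : C ≠ ⊥) : 1 ≤ d := by
  obtain ⟨M, hM, hM0, hMr⟩ := hd.1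
  by_contra h
  push_neg at h
  interval_cases d
  have : M.rank = 0 := hMr
  have hr : LinearMap.range M.mulVecLin = ⊥ := Submodule.finrank_eq_zero.mp this
  apply hM0
  ext i j
  have : M.mulVec (Pi.single j 1) ∈ LinearMap.range M.mulVecLin := ⟨Pi.single j 1, rfl⟩
  rw [hr, Submodule.mem_bot] at this
  have := congr_fun this i
  simpa [Matrix.mulVec_single] using this

theorem d_le_m (hC : C ≠ ⊥) : d ≤ m := by
  obtain ⟨M, hM, hM0, hMr⟩ := hd.1
  have := M.rank_le_width
  omega

theorem eq_zero_of_annihilates {M : Matrix (Fin n) (Fin m) F} (hM : M ∈ C)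
    {T : Submodule F (Fin m → F)} (hT : m - d + 1 ≤ finrank F T) (hdm : d ≤ m) (hd1 : 1 ≤ d)
    (h : ∀ t ∈ T, M.mulVec t = 0) : M = 0 := by
  by_contra hM0
  have h1 := d_le_rank C hd hM hM0
  have h2 := rank_le_of_annihilates h
  omega

end Core

theorem existsBetween {E : Type} [AddCommGroup E] [Module F E] [FiniteDimensional F E]
    (W : Submodule F E) (k : ℕ)
    (h1 : finrank F W ≤ k) (h2 : k ≤ finrank F E) : ∃ T, W ≤ T ∧ finrank F T = k := by
  induction k with
  | zero => exact ⟨W, le_refl _, Nat.le_zero.mp h1⟩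
  | succ k ih =>
    rcases Nat.lt_or_ge (finrank F W) (k+1) with h | h
    · obtain ⟨T, hWT, hT⟩ := ih (Nat.lt_succ_iff.mp h) (Nat.le_of_succ_le h2)
      have hTne : T ≠ ⊤ := by
        intro hTop
        rw [hTop, finrank_top] at hT
        omega
      obtain ⟨x, hx⟩ : ∃ x, x ∉ T := by
        by_contra hc
        push_neg at hc
        exact hTne (Submodule.eq_top_iff'.mpr hc)
      refine ⟨T ⊔ Submodule.span F {x}, le_trans hWT le_sup_left, ?_⟩
      have hdisj : T ⊓ Submodule.span F {x} = ⊥ := by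
        rw [Submodule.eq_bot_iff]
        intro y ⟨hyT, hyS⟩
        obtain ⟨c, rfl⟩ := Submodule.mem_span_singleton.mp hyS
        by_contra hy
        have hc0 : c ≠ 0 := by rintro rfl; simp at hy
        exact hx (by simpa [hc0] using T.smul_mem c⁻¹ hyT)
      have hx0 : x ≠ 0 := fun h => hx (h ▸ T.zero_mem)
      have := Submodule.finrank_sup_add_finrank_inf_eq T (Submodule.span F {x})
      rw [hdisj, finrank_bot, hT, finrank_span_singleton hx0] at this
      omega
    · exact ⟨W, le_refl _, le_antisymm h1 h⟩

section MRD
variable (C : Submodule F (Matrix (Fin n) (Fin m) F)) {d : ℕ}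
  (hd : IsLeast {r : ℕ | ∃ M ∈ C, M ≠ 0 ∧ M.rank = r} d)
  (hC : C ≠ ⊥) (hMRD : finrank F C = n * (m - d + 1))

include hd hC hMRD

theorem resT_surj {T : Submodule F (Fin m → F)} (hT : finrank F T = m - d + 1)
    (L : T →ₗ[F] (Fin n → F)) : ∃ M ∈ C, ∀ t : T, M.mulVec (t : Fin m → F) = L t := by
  have hd1 := d_pos C hd hC
  have hdm := d_le_m C hd hC
  let φ : C →ₗ[F] (T →ₗ[F] (Fin n → F)) := (resT T) ∘ₗ C.subtype
  have hinj : Function.Injective φ := by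
    rw [← LinearMap.ker_eq_bot, Submodule.eq_bot_iff]
    rintro ⟨M, hM⟩ hMk
    have : ∀ t ∈ T, M.mulVec t = 0 := by
      intro t ht
      have := LinearMap.congr_fun hMk ⟨t, ht⟩
      simpa [φ, resT_apply] using this
    have := eq_zero_of_annihilates C hd hM (le_of_eq hT.symm) hdm hd1 this
    exact Subtype.ext this
  have hrank : finrank F (T →ₗ[F] (Fin n → F)) = finrank F C := by
    rw [Module.finrank_linearMap, hT, finrank_pi, Fintype.card_fin, hMRD, mul_comm]
  have hsurj : Function.Surjective φ := by
    have h1 : finrank F (LinearMap.range φ) = finrank F (T →ₗ[F] (Fin n → F)) := by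
      rw [LinearMap.finrank_range_of_inj hinj, hrank]
    rw [← LinearMap.range_eq_top]
    exact Submodule.eq_top_of_finrank_eq h1
  obtain ⟨⟨M, hM⟩, hML⟩ := hsurj L
  exact ⟨M, hM, fun t => by
    have := LinearMap.congr_fun hML t
    simpa [φ, resT_apply] using this⟩

/-- the dual minimum distance bound -/
theorem dual_dist {B : Matrix (Fin n) (Fin m) F} (hB : B ≠ 0)
    (hBperp : ∀ M ∈ C, ∑ i, ∑ j, B i j * M i j = 0)
    (hrk : finrank F (LinearMap.range B.transpose.mulVecLin) ≤ m - d + 1) : False := by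
  have hd1 := d_pos C hd hC
  have hdm := d_le_m C hd hC
  obtain ⟨T, hRT, hT⟩ := existsBetween (LinearMap.range B.transpose.mulVecLin)
    (m - d + 1) hrk (by rw [finrank_pi, Fintype.card_fin]; omega)
  -- pick nonzero entry
  have : ∃ i j, B i j ≠ 0 := by
    by_contra hc
    push_neg at hc
    exact hB (by ext i j; simpa using hc i j)
  obtain ⟨i0, j0, hB0⟩ := this
  -- the linear map L
  let L : T →ₗ[F] (Fin n → F) :=
    { toFun := fun t => ((t : Fin m → F) j0) • (Pi.single i0 (1 : F) : Fin n → F)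
      map_add' := by intro a b; simp [add_smul]
      map_smul' := by
        intro c a
        simp only [SetLike.val_smul, Pi.smul_apply, smul_eq_mul, RingHom.id_apply, mul_smul]
      }
  obtain ⟨M, hM, hML⟩ := resT_surj C hd hC hMRD hT L
  -- rows of B lie in T
  have hrow : ∀ i : Fin n, (fun j => B i j) ∈ T := by
    intro i
    apply hRT
    refine ⟨Pi.single i 1, ?_⟩
    ext j
    simp [Matrix.mulVecLin_apply, Matrix.mulVec_single]
  have hkey : ∀ i : Fin n, ∑ j, B i j * M i j = B i j0 * (if i = i0 then 1 else 0) := by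
    intro i
    have h1 := hML ⟨fun j => B i j, hrow i⟩
    -- M.mulVec (row i of B) = (B i j0) • Pi.single i0 1
    have h2 := congr_fun h1 i
    simp only [Matrix.mulVec, dotProduct, L, LinearMap.coe_mk, AddHom.coe_mk] at h2
    calc ∑ j, B i j * M i j = ∑ j, M i j * B i j := by
          exact Finset.sum_congr rfl fun j _ => mul_comm _ _
      _ = (B i j0 • (Pi.single i0 (1:F) : Fin n → F)) i := h2
      _ = B i j0 * (if i = i0 then 1 else 0) := by simp [Pi.single_apply]
  have := hBperp M hM
  rw [Finset.sum_congr rfl (fun i _ => hkey i)] at this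
  simp [Finset.sum_ite_eq'] at this
  exact hB0 this

end MRD

theorem mem_codeC {C : Submodule F (Matrix (Fin n) (Fin m) F)} {V : Submodule F (Fin n → F)}
    {M : Matrix (Fin n) (Fin m) F} :
    M ∈ codeC C V ↔ M ∈ C ∧ ∀ x : Fin m → F, M.mulVec x ∈ V := Iff.rfl

section MRD2
variable (C : Submodule F (Matrix (Fin n) (Fin m) F)) {d : ℕ}
  (hd : IsLeast {r : ℕ | ∃ M ∈ C, M ≠ 0 ∧ M.rank = r} d)
  (hC : C ≠ ⊥) (hMRD : finrank F C = n * (m - d + 1))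

include hd hC hMRD

set_option maxHeartbeats 1000000 in
set_option synthInstance.maxHeartbeats 200000 in
theorem codeC_dim_small {U : Submodule F (Fin n → F)} {v : ℕ} (hU : finrank F U = n - v)
    (hvn : v ≤ n) (hv1 : v ≤ m - d + 1) :
    finrank F (codeC C U) + m * v = finrank F C := by
  classical
  have hd1 := d_pos C hd hC
  have hdm := d_le_m C hd hC
  let π' : Matrix (Fin n) (Fin m) F →ₗ[F] ((Fin m → F) →ₗ[F] ((Fin n → F) ⧸ U)) :=
    (LinearMap.llcomp F (Fin m → F) (Fin n → F) ((Fin n → F) ⧸ U) U.mkQ).comp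
      (LinearMap.toMatrix'.symm : Matrix (Fin n) (Fin m) F ≃ₗ[F] _).toLinearMap
  have hπ'app : ∀ (M : Matrix (Fin n) (Fin m) F) (x : Fin m → F),
      π' M x = U.mkQ (M.mulVec x) := fun M x => rfl
  let π : C →ₗ[F] ((Fin m → F) →ₗ[F] ((Fin n → F) ⧸ U)) := π' ∘ₗ C.subtype
  -- kernel
  have hker : LinearMap.ker π = (codeC C U).comap C.subtype := by
    ext ⟨M, hM⟩
    simp only [LinearMap.mem_ker, Submodule.mem_comap, mem_codeC, Submodule.subtype_apply]
    constructor
    · intro h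
      refine ⟨hM, fun x => ?_⟩
      have h2 : π' M x = 0 := by
        rw [show π' M = 0 from h]; rfl
      rw [hπ'app, Submodule.mkQ_apply, Submodule.Quotient.mk_eq_zero] at h2
      exact h2
    · intro ⟨_, h⟩
      show π' M = 0
      refine LinearMap.ext fun x => ?_
      rw [hπ'app, Submodule.mkQ_apply, LinearMap.zero_apply, Submodule.Quotient.mk_eq_zero]
      exact h x
  have hkerrank : finrank F (LinearMap.ker π) = finrank F (codeC C U) := by
    rw [hker]
    exact (Submodule.comapSubtypeEquivOfLe (inf_le_left : codeC C U ≤ C)).finrank_eq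
  -- surjectivity
  have hsurj : LinearMap.range π = ⊤ := by
    by_contra hne
    obtain ⟨f, hf0, hfbot⟩ := Submodule.exists_dual_map_eq_bot_of_lt_top
      (lt_top_iff_ne_top.mpr hne) inferInstance
    set g : Matrix (Fin n) (Fin m) F →ₗ[F] F := f ∘ₗ π' with hg
    set B : Matrix (Fin n) (Fin m) F :=
      Matrix.of (fun i j => g (Matrix.single i j 1)) with hBdef
    have hgB : ∀ M : Matrix (Fin n) (Fin m) F, g M = ∑ i, ∑ j, B i j * M i j := by
      intro M
      conv_lhs => rw [Matrix.matrix_eq_sum_single M]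
      rw [map_sum]
      refine Finset.sum_congr rfl fun i _ => ?_
      rw [map_sum]
      refine Finset.sum_congr rfl fun j _ => ?_
      have hstd : Matrix.single i j (M i j) = M i j • Matrix.single i j (1 : F) := by
        rw [Matrix.smul_single, smul_eq_mul, mul_one]
      rw [hstd, map_smul, smul_eq_mul, mul_comm]
      rfl
    -- B annihilates C
    have hBperp : ∀ M ∈ C, ∑ i, ∑ j, B i j * M i j = 0 := by
      intro M hM
      rw [← hgB M]
      have hmem : π' M ∈ LinearMap.range π := ⟨⟨M, hM⟩, rfl⟩
      have : f (π' M) ∈ (LinearMap.range π).map f := Submodule.mem_map_of_mem hmem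
      rw [hfbot, Submodule.mem_bot] at this
      exact this
    -- B is nonzero
    have hB0 : B ≠ 0 := by
      intro hB
      obtain ⟨φ, hφ⟩ : ∃ φ, f φ ≠ 0 := by
        by_contra hc
        push_neg at hc
        exact hf0 (LinearMap.ext fun φ => hc φ)
      obtain ⟨h, hh⟩ := Module.projective_lifting_property U.mkQ φ U.mkQ_surjective
      have hM : π' (LinearMap.toMatrix' h) = φ := by
        refine LinearMap.ext fun x => ?_
        have h2 : (LinearMap.toMatrix' h).mulVecLin = h :=
          LinearMap.toMatrix'.symm_apply_apply h
        rw [hπ'app, ← hh]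
        simp only [LinearMap.comp_apply, Submodule.mkQ_apply]
        congr 1
        rw [← Matrix.mulVecLin_apply, h2]
      have := hgB (LinearMap.toMatrix' h)
      rw [hB] at this
      simp only [Matrix.zero_apply, zero_mul, Finset.sum_const_zero] at this
      rw [hg] at this
      simp only [LinearMap.comp_apply] at this
      rw [hM] at this
      exact hφ this
    -- row space of B is contained in ker of mulVec of Bᵀ on U
    have hUB : ∀ u ∈ U, B.transpose.mulVec u = 0 := by
      intro u hu
      ext j
      let Mu : Matrix (Fin n) (Fin m) F := Matrix.of fun i k => u i * (if k = j then 1 else 0)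
      have hMu : π' Mu = 0 := by
        refine LinearMap.ext fun x => ?_
        have : Mu.mulVec x = x j • u := by
          ext i
          simp [Mu, Matrix.mulVec, dotProduct, mul_assoc, mul_comm,
            Finset.sum_ite_eq', mul_left_comm]
        rw [hπ'app, Submodule.mkQ_apply, LinearMap.zero_apply, Submodule.Quotient.mk_eq_zero, this]
        exact U.smul_mem _ hu
      have hg0 : g Mu = 0 := by
        rw [hg]
        simp only [LinearMap.comp_apply, hMu, map_zero]
      rw [hgB Mu] at hg0
      have : ∑ i, ∑ k, B i k * Mu i k = ∑ i, B i j * u i := by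
        refine Finset.sum_congr rfl fun i _ => ?_
        simp [Mu, mul_comm, mul_left_comm, Finset.sum_ite_eq']
      rw [this] at hg0
      show B.transpose.mulVec u j = 0
      have htrans : B.transpose.mulVec u j = ∑ i, B i j * u i := by
        simp [Matrix.mulVec, dotProduct, Matrix.transpose_apply]
      rw [htrans]
      exact hg0
    have hUker : U ≤ LinearMap.ker B.transpose.mulVecLin := by
      intro u hu
      rw [LinearMap.mem_ker, Matrix.mulVecLin_apply]
      exact hUB u hu
    have hrk : finrank F (LinearMap.range B.transpose.mulVecLin) ≤ m - d + 1 := by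
      have h1 := LinearMap.finrank_range_add_finrank_ker B.transpose.mulVecLin
      have h2 : finrank F U ≤ finrank F (LinearMap.ker B.transpose.mulVecLin) :=
        Submodule.finrank_mono hUker
      rw [finrank_pi, Fintype.card_fin] at h1
      omega
    exact dual_dist C hd hC hMRD hB0 hBperp hrk
  -- conclusion
  have h1 := LinearMap.finrank_range_add_finrank_ker π
  rw [hsurj, hkerrank] at h1
  have hQ : finrank F ((Fin n → F) ⧸ U) = v := by
    have := Submodule.finrank_quotient_add_finrank U
    rw [finrank_pi, Fintype.card_fin] at this
    omega
  rw [finrank_top, Module.finrank_linearMap, hQ, finrank_pi, Fintype.card_fin] at h1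
  omega

end MRD2

section More
variable (C : Submodule F (Matrix (Fin n) (Fin m) F)) {d : ℕ}
  (hd : IsLeast {r : ℕ | ∃ M ∈ C, M ≠ 0 ∧ M.rank = r} d)
  (hC : C ≠ ⊥)

include hd hC

theorem codeC_eq_bot {U : Submodule F (Fin n → F)} (hU : finrank F U ≤ d - 1) :
    codeC C U = ⊥ := by
  have hd1 := d_pos C hd hC
  rw [Submodule.eq_bot_iff]
  intro M hM
  rw [mem_codeC] at hM
  by_contra hM0
  have h1 := d_le_rank C hd hM.1 hM0
  have h2 : LinearMap.range M.mulVecLin ≤ U := by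
    rintro _ ⟨x, rfl⟩
    exact hM.2 x
  have h3 : M.rank ≤ finrank F U := Submodule.finrank_mono h2
  omega

set_option maxHeartbeats 1000000 in
set_option synthInstance.maxHeartbeats 400000 in
theorem codeC_dim_le {U : Submodule F (Fin n → F)} :
    finrank F (codeC C U) ≤ (m - d + 1) * finrank F U := by
  classical
  have hd1 := d_pos C hd hC
  have hdm := d_le_m C hd hC
  obtain ⟨T, _, hT⟩ := existsBetween (⊥ : Submodule F (Fin m → F)) (m - d + 1)
    (by simp) (by rw [finrank_pi, Fintype.card_fin]; omega)
  let ψ : codeC C U →ₗ[F] (T →ₗ[F] U) :=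
    { toFun := fun M =>
        { toFun := fun t => ⟨(M : Matrix (Fin n) (Fin m) F).mulVec t, M.2.2 t⟩
          map_add' := by
            intro a b
            apply Subtype.ext
            simp [Matrix.mulVec_add]
          map_smul' := by
            intro c a
            apply Subtype.ext
            simp [Matrix.mulVec_smul] }
      map_add' := by
        intro M N
        refine LinearMap.ext fun t => Subtype.ext ?_
        exact Matrix.add_mulVec (M : Matrix (Fin n) (Fin m) F) (N : Matrix (Fin n) (Fin m) F) (t : Fin m → F)
      map_smul' := by
        intro c M
        refine LinearMap.ext fun t => Subtype.ext ?_
        exact Matrix.smul_mulVec c (M : Matrix (Fin n) (Fin m) F) (t : Fin m → F) }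
  have hker0 : LinearMap.ker ψ = ⊥ := by
    rw [Submodule.eq_bot_iff]
    rintro ⟨M, hM⟩ hMk
    have hz : ∀ t ∈ T, M.mulVec t = 0 := by
      intro t ht
      have := LinearMap.congr_fun hMk ⟨t, ht⟩
      have := congr_arg Subtype.val this
      simpa [ψ] using this
    have := eq_zero_of_annihilates C hd hM.1 (le_of_eq hT.symm) hdm hd1 hz
    exact Subtype.ext this
  have hinj : Function.Injective ψ := (injective_iff_map_eq_zero ψ).mpr fun a ha =>
    (Submodule.mem_bot F).mp (hker0 ▸ LinearMap.mem_ker.mpr ha)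
  calc finrank F (codeC C U) ≤ finrank F (T →ₗ[F] U) :=
        LinearMap.finrank_le_finrank_of_injective hinj
    _ = (m - d + 1) * finrank F U := by rw [Module.finrank_linearMap, hT]

end More

theorem finrank_dotPerp {F : Type} [Field F] {n : ℕ} (V : Submodule F (Fin n → F)) :
    finrank F (dotPerp V) = n - finrank F V := by
  classical
  let Φ : (Fin n → F) →ₗ[F] (V →ₗ[F] F) :=
    { toFun := fun w =>
        { toFun := fun x => dotProduct (x : Fin n → F) w
          map_add' := by intro x y; simp [add_dotProduct]
          map_smul' := by intro c x; simp [smul_dotProduct] }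
      map_add' := by intro w w'; ext x; simp [dotProduct_add]
      map_smul' := by intro c w; ext x; simp [dotProduct_smul] }
  have hker : LinearMap.ker Φ = dotPerp V := by
    ext w
    constructor
    · intro hw v hv
      have := LinearMap.congr_fun hw ⟨v, hv⟩
      simpa [Φ] using this
    · intro hw
      ext ⟨v, hv⟩
      simpa [Φ] using hw v hv
  have hsurj : Function.Surjective Φ := by
    intro f
    obtain ⟨g, hg⟩ := LinearMap.exists_extend f
    refine ⟨fun i => g (Pi.single i 1), ?_⟩
    ext ⟨v, hv⟩
    have := g.pi_apply_eq_sum_univ v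
    simp only [Φ, LinearMap.coe_mk, AddHom.coe_mk, dotProduct]
    rw [← hg]
    simp only [LinearMap.comp_apply, Submodule.subtype_apply]
    rw [this]
    refine Finset.sum_congr rfl fun i _ => ?_
    rw [smul_eq_mul]
    congr 1
    · congr 1
      ext j
      simp [Pi.single_apply, eq_comm]
  have h1 := LinearMap.finrank_range_add_finrank_ker Φ
  rw [LinearMap.range_eq_top.mpr hsurj, hker] at h1
  have h2 : finrank F (V →ₗ[F] F) = finrank F V := Subspace.dual_finrank_eq
  rw [finrank_top, finrank_pi, Fintype.card_fin] at h1
  have hV : finrank F V ≤ n := by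
    have := Submodule.finrank_le V
    simpa [finrank_pi] using this
  omega


theorem dotPerp_antitone {F : Type} [Field F] {n : ℕ} {V' V : Submodule F (Fin n → F)}
    (h : V' ≤ V) : dotPerp V ≤ dotPerp V' := fun w hw v hv => hw v (h hv)

theorem codeC_mono {F : Type} [Field F] {n m : ℕ} (C : Submodule F (Matrix (Fin n) (Fin m) F))
    {U U' : Submodule F (Fin n → F)} (h : U ≤ U') : codeC C U ≤ codeC C U' := by
  intro M hM
  rw [mem_codeC] at *
  exact ⟨hM.1, fun x => h (hM.2 x)⟩

/-- For an MRD code `C ≤ 𝔽_q^{n×m}` with `m ≤ n` and rank distance `d`,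
the column rank function satisfies: `ρ_c(V) = v` if `v ≤ m − d + 1`;
`ρ_c(V) = n(m − d + 1)/m` if `v ≥ n − d + 1`; and
`ρ_c(V) ≥ max{1, v/m}·(m − d + 1)` if `m − d + 2 ≤ v ≤ n − d`. -/
theorem rhoC_of_MRD
    {F : Type} [Field F] [Fintype F] {n m : ℕ} (hmn : m ≤ n)
    (C : Submodule F (Matrix (Fin n) (Fin m) F)) (hC : C ≠ ⊥)
    (d : ℕ)
    (hd : IsLeast {r : ℕ | ∃ M ∈ C, M ≠ 0 ∧ M.rank = r} d)
    (hMRD : finrank F C = n * (m - d + 1))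
    (V : Submodule F (Fin n → F)) (v : ℕ) (hv : finrank F V = v) :
    (v ≤ m - d + 1 → rhoC C V = (v : ℚ)) ∧
    (n - d + 1 ≤ v → rhoC C V = (n : ℚ) * ((m : ℚ) - (d : ℚ) + 1) / (m : ℚ)) ∧
    (m - d + 2 ≤ v → v ≤ n - d →
      max 1 ((v : ℚ) / (m : ℚ)) * ((m : ℚ) - (d : ℚ) + 1) ≤ rhoC C V) := by
  classical
  have hd1 : 1 ≤ d := d_pos C hd hC
  have hdm : d ≤ m := d_le_m C hd hC
  have hvn : v ≤ n := by
    rw [← hv]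
    have := Submodule.finrank_le V
    rwa [finrank_pi, Fintype.card_fin] at this
  have hm0 : (0:ℚ) < (m:ℚ) := by
    have : 0 < m := by omega
    exact_mod_cast this
  have hmne : (m:ℚ) ≠ 0 := ne_of_gt hm0
  have hUrank : finrank F (dotPerp V) = n - v := by rw [finrank_dotPerp, hv]
  have hkcast : ((m - d + 1 : ℕ) : ℚ) = (m:ℚ) - (d:ℚ) + 1 := by
    rw [Nat.cast_add, Nat.cast_sub hdm, Nat.cast_one]
  refine ⟨?_, ?_, ?_⟩
  · -- case 1
    intro hv1
    have key := codeC_dim_small C hd hC hMRD hUrank hvn hv1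
    have keyQ : (finrank F (codeC C (dotPerp V)) : ℚ) + (m:ℚ) * v = finrank F C := by
      exact_mod_cast key
    rw [rhoC]
    field_simp
    linarith
  · -- case 2
    intro hv2
    have hUsmall : finrank F (dotPerp V) ≤ d - 1 := by
      rw [hUrank]
      omega
    have hbot := codeC_eq_bot C hd hC hUsmall
    rw [rhoC, hbot, finrank_bot, hMRD]
    rw [Nat.cast_mul, hkcast]
    push_cast
    ring
  · -- case 3
    intro hv3 hv4
    set k : ℕ := m - d + 1 with hkdef
    set a : ℕ := finrank F C with hadef
    set b : ℕ := finrank F (codeC C (dotPerp V)) with hbdef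
    -- (a)  rhoC ≥ k
    have bound1 : (k:ℚ) ≤ rhoC C V := by
      -- find subspace V' ≤ V with finrank k
      obtain ⟨T', _, hT'⟩ := existsBetween (⊥ : Submodule F V) k (by simp)
        (by rw [hv]; omega)
      set V' : Submodule F (Fin n → F) := T'.map V.subtype with hV'def
      have hV'le : V' ≤ V := Submodule.map_subtype_le V T'
      have hV'rank : finrank F V' = k := by
        rw [hV'def, Submodule.finrank_map_subtype_eq, hT']
      have hU'rank : finrank F (dotPerp V') = n - k := by
        rw [finrank_dotPerp, hV'rank]
      have key := codeC_dim_small C hd hC hMRD hU'rank (by omega) (le_refl k)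
      have hmono : b ≤ finrank F (codeC C (dotPerp V')) :=
        Submodule.finrank_mono (codeC_mono C (dotPerp_antitone hV'le))
      have h1 : (b:ℚ) + (m:ℚ) * k ≤ (a:ℚ) := by
        have : b + m * k ≤ a := by omega
        exact_mod_cast this
      rw [rhoC, le_div_iff₀ hm0]
      linarith
    -- (b)  rhoC ≥ (v/m) * k
    have bound2 : ((v:ℚ)/(m:ℚ)) * (k:ℚ) ≤ rhoC C V := by
      have hle := codeC_dim_le C hd hC (U := dotPerp V)
      rw [hUrank] at hle
      have ha : a = n * k := hMRD
      have h1 : (b:ℚ) ≤ (k:ℚ) * ((n:ℚ) - v) := by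
        have h2 : (b:ℚ) ≤ ((k * (n - v) : ℕ) : ℚ) := by exact_mod_cast hle
        rw [Nat.cast_mul, Nat.cast_sub hvn] at h2
        exact h2
      have h2 : (a:ℚ) = (n:ℚ) * k := by rw [ha]; push_cast; ring
      rw [rhoC, le_div_iff₀ hm0]
      have : ((v:ℚ)/(m:ℚ)) * (k:ℚ) * (m:ℚ) = (v:ℚ) * k := by field_simp
      rw [this]
      nlinarith
    rw [← hkcast]
    rcases max_cases (1:ℚ) ((v:ℚ)/(m:ℚ)) with ⟨hmax, hle⟩ | ⟨hmax, hlt⟩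
    · rw [hmax, one_mul]
      exact bound1
    · rw [hmax]
      exact bound2
end

section
/- Let 𝔽_{q^m} be a degree-m field extension of 𝔽_q, fix an 𝔽_q-basis of 𝔽_{q^m} with coordinate map ψ: 𝔽_{q^m} → 𝔽_q^m, and let Ψ: 𝔽_{q^m}^n → 𝔽_q^{n×m} be the entrywise extension of ψ. Let C ≤ 𝔽_{q^m}^n be an 𝔽_{q^m}-linear code with generator matrix G ∈ 𝔽_{q^m}^{k×n}, where k = dim_{𝔽_{q^m}} C, and let ρ_c be the column rank function of the rank-metric code Ψ(C) ≤ 𝔽_q^{n×m}. If V ≤ 𝔽_q^n is a subspace with V = colsp(Y) for a matrix Y ∈ 𝔽_q^{n×t}, then ρ_c(V) = rk_{𝔽_{q^m}}(GY). -/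
open Module

/-- Let `𝔽_{q^m}/𝔽_q` be a degree-`m` extension with coordinate map
`ψ` (entrywise extension `Ψ`), let `C ≤ 𝔽_{q^m}^n` be `𝔽_{q^m}`-linear with generator
matrix `G ∈ 𝔽_{q^m}^{k×n}`, and let `ρ_c` be the column rank function of `Ψ(C)`.
If `V = colsp(Y)` for `Y ∈ 𝔽_q^{n×t}`, then `ρ_c(V) = rk_{𝔽_{q^m}}(GY)`. -/
theorem rhoC_eq_rank_G_mul_Y
    {F K : Type} [Field F] [Fintype F] [Field K] [Algebra F K]
    {m n k t : ℕ}
    (b : Basis (Fin m) F K)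
    (Psi : (Fin n → K) →ₗ[F] Matrix (Fin n) (Fin m) F)
    (hPsi : ∀ (x : Fin n → K) (i : Fin n) (j : Fin m), Psi x i j = b.repr (x i) j)
    (C : Submodule K (Fin n → K))
    (G : Matrix (Fin k) (Fin n) K)
    (hk : finrank K C = k)
    (hGspan : LinearMap.range G.vecMulLinear = C)
    (hGindep : LinearIndependent K (fun i : Fin k => G i))
    (V : Submodule F (Fin n → F)) (Y : Matrix (Fin n) (Fin t) F)
    (hV : LinearMap.range Y.mulVecLin = V) :
    rhoC (Submodule.map Psi (C.restrictScalars F)) V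
      = ((G * Y.map (algebraMap F K)).rank : ℚ) := by
  classical
  set Y' : Matrix (Fin n) (Fin t) K := Y.map (algebraMap F K) with hY'
  set L : (Fin n → K) →ₗ[K] (Fin t → K) := Y'.vecMulLinear with hLdef
  -- injectivity of Psi
  have hinj : Function.Injective Psi := by
    intro x y hxy
    funext i
    apply b.repr.injective
    ext j
    have := congrFun (congrFun hxy i) j
    rwa [hPsi, hPsi] at this
  -- characterization of ker L
  have hkerL : ∀ x : Fin n → K,
      (x ∈ LinearMap.ker L ↔ ∀ v ∈ V, (∑ i, algebraMap F K (v i) * x i) = 0) := by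
    intro x
    rw [LinearMap.mem_ker]
    constructor
    · intro h v hv
      rw [← hV] at hv
      obtain ⟨u, rfl⟩ := hv
      have h' : ∀ s, Matrix.vecMul x Y' s = 0 := fun s => congrFun h s
      simp only [Matrix.vecMul, dotProduct, Matrix.map_apply, hY'] at h'
      simp only [Matrix.mulVecLin_apply, Matrix.mulVec, dotProduct]
      calc (∑ i, algebraMap F K (∑ s, Y i s * u s) * x i)
          = ∑ i, ∑ s, algebraMap F K (u s) * (x i * algebraMap F K (Y i s)) := by
            congr 1; funext i
            rw [map_sum, Finset.sum_mul]
            congr 1; funext s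
            rw [map_mul]; ring
        _ = ∑ s, algebraMap F K (u s) * ∑ i, x i * algebraMap F K (Y i s) := by
            rw [Finset.sum_comm]
            congr 1; funext s
            rw [Finset.mul_sum]
        _ = 0 := by
            refine Finset.sum_eq_zero fun s _ => ?_
            rw [h' s, mul_zero]
    · intro h
      funext s
      have hv : Y.mulVec (Pi.single s 1) ∈ V := by
        rw [← hV]; exact ⟨Pi.single s 1, rfl⟩
      have h2 := h _ hv
      simp only [Matrix.mulVec_single, MulOpposite.op_one, one_smul, Matrix.col_apply, mul_one] at h2
      simp only [hLdef, Matrix.vecMulLinear_apply, Matrix.vecMul, dotProduct,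
        Matrix.map_apply, hY', Pi.zero_apply]
      rw [← h2]
      congr 1; funext i; ring
  -- lemma A
  have hA : ∀ x : Fin n → K, (Psi x ∈ colspLE (dotPerp V) ↔ x ∈ LinearMap.ker L) := by
    intro x
    rw [hkerL]
    constructor
    · intro h v hv
      have key : ∀ j, (∑ i, v i • b.repr (x i)) j = 0 := by
        intro j
        have h2 := h (Pi.single j 1) v hv
        simp only [dotProduct, Matrix.mulVec_single, MulOpposite.op_one, one_smul, Matrix.col_apply, mul_one, hPsi] at h2
        simpa using h2
      have hsmul : (∑ i, algebraMap F K (v i) * x i) = ∑ i, v i • x i := by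
        simp [Algebra.smul_def]
      have hrepr : b.repr (∑ i, algebraMap F K (v i) * x i) = 0 := by
        rw [hsmul, map_sum]
        ext j
        simpa [map_smul] using key j
      exact b.repr.injective (by simpa using hrepr)
    · intro h c v hv
      show dotProduct v ((Psi x).mulVec c) = 0
      have hrepr : b.repr (∑ i, algebraMap F K (v i) * x i) = 0 := by rw [h v hv]; simp
      calc dotProduct v ((Psi x).mulVec c)
          = ∑ j, c j * (∑ i, v i • b.repr (x i)) j := by
            simp only [dotProduct, Matrix.mulVec, hPsi, Finsupp.coe_finset_sum,
              Finset.sum_apply, Finsupp.smul_apply, Finset.mul_sum, smul_eq_mul]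
            rw [Finset.sum_comm]
            congr 1; funext j
            congr 1; funext i
            ring
        _ = 0 := by
            refine Finset.sum_eq_zero fun j _ => ?_
            have hsmul : (∑ i, algebraMap F K (v i) * x i) = ∑ i, v i • x i := by
              simp [Algebra.smul_def]
            rw [hsmul, map_sum] at hrepr
            have : (∑ i, v i • b.repr (x i)) j = 0 := by
              have := DFunLike.congr_fun hrepr j
              simpa [map_smul] using this
            rw [this, mul_zero]
  -- submodule equality
  have hCeq : codeC (Submodule.map Psi (C.restrictScalars F)) (dotPerp V)
      = Submodule.map Psi ((C ⊓ LinearMap.ker L).restrictScalars F) := by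
    ext M
    simp only [codeC, Submodule.mem_inf, Submodule.mem_map, Submodule.restrictScalars_mem,
      Submodule.mem_inf]
    constructor
    · rintro ⟨⟨x, hxC, rfl⟩, hM2⟩
      exact ⟨x, ⟨hxC, (hA x).mp hM2⟩, rfl⟩
    · rintro ⟨x, ⟨hxC, hxK⟩, rfl⟩
      exact ⟨⟨x, hxC, rfl⟩, (hA x).mpr hxK⟩
  -- dimension facts
  haveI : FiniteDimensional F K := Module.Finite.of_basis b
  have hm : finrank F K = m := by rw [finrank_eq_card_basis b, Fintype.card_fin]
  have hmpos : 0 < m := hm ▸ finrank_pos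
  have hmap : ∀ S : Submodule K (Fin n → K),
      finrank F (Submodule.map Psi (S.restrictScalars F)) = m * finrank K S := by
    intro S
    rw [← LinearEquiv.finrank_eq (Submodule.equivMapOfInjective Psi hinj (S.restrictScalars F))]
    rw [LinearEquiv.finrank_eq ((Submodule.restrictScalarsEquiv F K (Fin n → K) S).restrictScalars F)]
    rw [← hm, finrank_mul_finrank F K S]
  -- rank-nullity
  have hmapL : Submodule.map L C = LinearMap.range (G * Y').vecMulLinear := by
    rw [← hGspan, ← LinearMap.range_comp]
    congr 1
    apply LinearMap.ext
    intro c
    simp only [LinearMap.comp_apply, hLdef, Matrix.vecMulLinear_apply, Matrix.vecMul_vecMul]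
  have hrank : finrank K (LinearMap.range (G * Y').vecMulLinear) = (G * Y').rank := by
    have hre : LinearMap.range (G * Y').vecMulLinear
        = LinearMap.range (Matrix.mulVecLin (Matrix.transpose (G * Y'))) := by
      apply le_antisymm
      · rintro _ ⟨c, rfl⟩
        exact ⟨c, Matrix.mulVec_transpose _ c⟩
      · rintro _ ⟨c, rfl⟩
        exact ⟨c, (Matrix.mulVec_transpose _ c).symm⟩
    rw [hre, ← Matrix.rank_transpose (G * Y')]
    rfl
  have hker : finrank K (LinearMap.ker (L ∘ₗ C.subtype)) = finrank K (C ⊓ LinearMap.ker L : Submodule K (Fin n → K)) := by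
    have h1 : LinearMap.ker (L ∘ₗ C.subtype) = Submodule.comap C.subtype ((C ⊓ LinearMap.ker L : Submodule K (Fin n → K))) := by
      rw [LinearMap.ker_comp]
      ext ⟨x, hx⟩
      simp [hx]
    rw [h1]
    exact LinearEquiv.finrank_eq (Submodule.comapSubtypeEquivOfLe inf_le_left)
  have hrange : LinearMap.range (L ∘ₗ C.subtype) = LinearMap.range (G * Y').vecMulLinear := by
    rw [LinearMap.range_comp, Submodule.range_subtype, hmapL]
  have hRN := LinearMap.finrank_range_add_finrank_ker (L ∘ₗ C.subtype)
  rw [hrange, hker, hrank, hk] at hRN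
  -- hRN : (G * Y').rank + finrank K (C ⊓ ker L) = k
  -- final computation
  have final : rhoC (Submodule.map Psi (C.restrictScalars F)) V
      = ((G * Y.map (algebraMap F K)).rank : ℚ) := by
    rw [rhoC, hCeq, hmap C, hmap (C ⊓ LinearMap.ker L), hk]
    have hm0 : (m : ℚ) ≠ 0 := Nat.cast_ne_zero.mpr hmpos.ne'
    have hkq : (k : ℚ) = ((G * Y').rank : ℚ)
        + (finrank K (C ⊓ LinearMap.ker L : Submodule K (Fin n → K)) : ℚ) := by
      exact_mod_cast hRN.symm
    push_cast
    rw [hkq, ← hY']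
    field_simp
    ring
  exact final
end

section
/- Let (𝔽_q^n, ρ) be a q-matroid and let B = {v₁, …, v_n} be a basis of 𝔽_q^n. Define r: 2^B → ℕ₀ by r(A) = ρ(⟨A⟩), the value of ρ on the 𝔽_q-span of A. Then (B, r) is a matroid, i.e., r satisfies r(A) ≤ |A| for all A ⊆ B, r(A) ≤ r(A') whenever A ⊆ A' ⊆ B, and r(A∪A') + r(A∩A') ≤ r(A) + r(A') for all A, A' ⊆ B. -/
open Module

/-- Let `(𝔽_q^n, ρ)` be a `q`-matroid and `B = {v₁,…,vₙ}` a basis of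
`𝔽_q^n`. Then `r(A) = ρ(⟨A⟩)` defines a matroid rank function on `B`. -/
theorem induced_matroid_of_qMatroid
    {F : Type} [Field F] [Fintype F] {n : ℕ}
    (ρ : Submodule F (Fin n → F) → ℕ)
    (hR1 : ∀ V : Submodule F (Fin n → F), ρ V ≤ finrank F V)
    (hR2 : ∀ V W : Submodule F (Fin n → F), V ≤ W → ρ V ≤ ρ W)
    (hR3 : ∀ V W : Submodule F (Fin n → F), ρ (V ⊔ W) + ρ (V ⊓ W) ≤ ρ V + ρ W)
    (B : Basis (Fin n) F (Fin n → F))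
    (r : Finset (Fin n) → ℕ)
    (hr : ∀ A : Finset (Fin n), r A = ρ (Submodule.span F (⇑B '' ↑A))) :
    (∀ A : Finset (Fin n), r A ≤ A.card) ∧
    (∀ A A' : Finset (Fin n), A ⊆ A' → r A ≤ r A') ∧
    (∀ A A' : Finset (Fin n), r (A ∪ A') + r (A ∩ A') ≤ r A + r A') := by
  classical
  refine ⟨?_, ?_, ?_⟩
  · intro A
    rw [hr A]
    calc ρ (Submodule.span F (⇑B '' ↑A))
        ≤ finrank F (Submodule.span F (⇑B '' ↑A)) := hR1 _
      _ ≤ (A.image B).card := by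
          rw [← Finset.coe_image]
          exact finrank_span_finset_le_card _
      _ ≤ A.card := Finset.card_image_le
  · intro A A' h
    rw [hr A, hr A']
    exact hR2 _ _ (Submodule.span_mono (Set.image_mono (by exact_mod_cast h)))
  · intro A A'
    rw [hr (A ∪ A'), hr (A ∩ A'), hr A, hr A']
    have h1 : Submodule.span F (⇑B '' ↑(A ∪ A')) =
        Submodule.span F (⇑B '' ↑A) ⊔ Submodule.span F (⇑B '' ↑A') := by
      rw [Finset.coe_union, Set.image_union, Submodule.span_union]
    have h2 : Submodule.span F (⇑B '' ↑(A ∩ A')) ≤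
        Submodule.span F (⇑B '' ↑A) ⊓ Submodule.span F (⇑B '' ↑A') := by
      refine le_inf ?_ ?_
      · exact Submodule.span_mono (Set.image_mono (by
          exact_mod_cast Finset.inter_subset_left))
      · exact Submodule.span_mono (Set.image_mono (by
          exact_mod_cast Finset.inter_subset_right))
    calc ρ (Submodule.span F (⇑B '' ↑(A ∪ A'))) + ρ (Submodule.span F (⇑B '' ↑(A ∩ A')))
        ≤ ρ (Submodule.span F (⇑B '' ↑A) ⊔ Submodule.span F (⇑B '' ↑A')) +
          ρ (Submodule.span F (⇑B '' ↑A) ⊓ Submodule.span F (⇑B '' ↑A')) := by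
          rw [h1]; exact Nat.add_le_add_left (hR2 _ _ h2) _
      _ ≤ _ := hR3 _ _
end

section
/- Let 𝔽_{q^m} be a degree-m field extension of 𝔽_q, let Ψ: 𝔽_{q^m}^n → 𝔽_q^{n×m} be the entrywise coordinate-map isomorphism with respect to a fixed 𝔽_q-basis of 𝔽_{q^m}, let G ∈ 𝔽_{q^m}^{k×n} have 𝔽_{q^m}-rank k, and let ρ be the column rank function of Ψ(rowsp_{𝔽_{q^m}}(G)), so that M_G = (𝔽_q^n, ρ) is a q-matroid. Let B = {v₁, …, v_n} be a basis of 𝔽_q^n and define r(A) = ρ(⟨A⟩) for A ⊆ B. Set X = (v₁, …, v_n) ∈ GL_n(𝔽_q) and G' = GX, with columns of G' indexed by v₁, …, v_n. Then r(A) = rk_{𝔽_{q^m}}(G'_A) for every A ⊆ B, where G'_A is the submatrix of G' of columns indexed by A; in particular the matroid (B, r) is representable over 𝔽_{q^m}. -/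
open Module

private lemma aux_rank_nullity {K : Type} [Field K] {k : ℕ} {s : Type} [Fintype s]
    (M : Matrix (Fin k) s K) :
    M.rank + Module.finrank K (LinearMap.ker M.vecMulLinear) = k := by
  have h := LinearMap.finrank_range_add_finrank_ker (Matrix.transpose M).mulVecLin
  rw [Matrix.mulVecLin_transpose] at h
  have h2 : finrank K (LinearMap.range M.vecMulLinear) = M.rank := by
    rw [← Matrix.mulVecLin_transpose]
    exact Matrix.rank_transpose M
  rw [h2, Module.finrank_fin_fun] at h
  exact h

private lemma mem_colspLE_iff {F : Type} [Field F] {n m : ℕ} (V : Submodule F (Fin n → F))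
    (M : Matrix (Fin n) (Fin m) F) : M ∈ colspLE V ↔ ∀ x : Fin m → F, M.mulVec x ∈ V :=
  Iff.rfl

private lemma mem_dotPerp_iff {F : Type} [Field F] {n : ℕ} (V : Submodule F (Fin n → F))
    (w : Fin n → F) : w ∈ dotPerp V ↔ ∀ v ∈ V, dotProduct v w = 0 :=
  Iff.rfl

private lemma mem_colspLE_dotPerp {F : Type} [Field F] {n m : ℕ} (s : Set (Fin n → F))
    (M : Matrix (Fin n) (Fin m) F) :
    M ∈ colspLE (dotPerp (Submodule.span F s)) ↔ ∀ v ∈ s, Matrix.vecMul v M = 0 := by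
  rw [mem_colspLE_iff]
  constructor
  · intro h v hv
    funext j
    have hj := (mem_dotPerp_iff _ _).1 (h (Pi.single j 1)) v (Submodule.subset_span hv)
    rw [Matrix.dotProduct_mulVec, dotProduct_single, mul_one] at hj
    simpa using hj
  · intro h y
    rw [mem_dotPerp_iff]
    intro v hv
    have hle : Submodule.span F s ≤ LinearMap.ker M.vecMulLinear :=
      Submodule.span_le.2 fun w hw => by
        simp only [SetLike.mem_coe, LinearMap.mem_ker, Matrix.vecMulLinear_apply]
        exact h w hw
    have hv0 : Matrix.vecMul v M = 0 := by
      have := hle hv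
      simpa using this
    rw [Matrix.dotProduct_mulVec, hv0, zero_dotProduct]

/-- Let `ρ` be the column rank function of `Ψ(rowsp_{𝔽_{q^m}}(G))` for a
full-rank `G ∈ 𝔽_{q^m}^{k×n}`, let `B = {v₁,…,vₙ}` be a basis of `𝔽_q^n`, `r(A) = ρ(⟨A⟩)`,
`X = (v₁,…,vₙ)` and `G' = GX`. Then `r(A) = rk_{𝔽_{q^m}}(G'_A)` for every `A ⊆ B`;
in particular the induced matroid `(B, r)` is representable over `𝔽_{q^m}`. -/
theorem induced_matroid_representable
    {F K : Type} [Field F] [Fintype F] [Field K] [Algebra F K]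
    {m n k : ℕ}
    (b : Basis (Fin m) F K)
    (Psi : (Fin n → K) →ₗ[F] Matrix (Fin n) (Fin m) F)
    (hPsi : ∀ (x : Fin n → K) (i : Fin n) (j : Fin m), Psi x i j = b.repr (x i) j)
    (G : Matrix (Fin k) (Fin n) K)
    (hG : G.rank = k)
    (ρ : Submodule F (Fin n → F) → ℚ)
    (hρ : ∀ V : Submodule F (Fin n → F),
      ρ V = rhoC (Submodule.map Psi ((LinearMap.range G.vecMulLinear).restrictScalars F)) V)
    (B : Basis (Fin n) F (Fin n → F))
    (r : Finset (Fin n) → ℚ)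
    (hr : ∀ A : Finset (Fin n), r A = ρ (Submodule.span F (⇑B '' ↑A)))
    (X : Matrix (Fin n) (Fin n) F)
    (hX : ∀ i j : Fin n, X i j = B j i)
    (G' : Matrix (Fin k) (Fin n) K)
    (hG' : G' = G * X.map (algebraMap F K)) :
    ∀ A : Finset (Fin n),
      r A = ((G'.submatrix id (fun a : {x : Fin n // x ∈ A} => (a : Fin n))).rank : ℚ) := by
  intro A
  classical
  -- basic facts
  haveI : Module.Finite F K := Module.Finite.of_basis b
  have hmK : finrank F K = m := by
    rw [finrank_eq_card_basis b, Fintype.card_fin]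
  have hmQ : (m : ℚ) ≠ 0 := by
    have : 0 < finrank F K := finrank_pos
    rw [hmK] at this
    exact_mod_cast this.ne'
  have hPsiInj : Function.Injective Psi := by
    intro x y hxy
    funext i
    apply b.repr.injective
    ext j
    have h1 : Psi x i j = Psi y i j := by rw [hxy]
    rw [hPsi, hPsi] at h1
    exact h1
  set GA : Matrix (Fin k) {x : Fin n // x ∈ A} K :=
    G'.submatrix id (fun a : {x : Fin n // x ∈ A} => (a : Fin n)) with hGAdef
  set φ : (Fin k → K) →ₗ[F] Matrix (Fin n) (Fin m) F :=
    Psi ∘ₗ (G.vecMulLinear.restrictScalars F) with hφdef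
  have hφu : ∀ u : Fin k → K, φ u = Psi (Matrix.vecMul u G) := fun u => rfl
  -- injectivity of φ
  have hGker : LinearMap.ker G.vecMulLinear = ⊥ := by
    have h := aux_rank_nullity G
    rw [hG] at h
    have h0 : finrank K (LinearMap.ker G.vecMulLinear) = 0 := by omega
    exact Submodule.finrank_eq_zero.mp h0
  have hGinj : Function.Injective G.vecMulLinear := LinearMap.ker_eq_bot.mp hGker
  have hφinj : Function.Injective φ := by
    intro x y hxy
    exact hGinj (hPsiInj hxy)
  -- the code is the range of φ
  have hC : Submodule.map Psi ((LinearMap.range G.vecMulLinear).restrictScalars F)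
      = LinearMap.range φ := by
    rw [hφdef, LinearMap.range_comp]
    rfl
  -- dimension of the code
  have hdimC : finrank F (LinearMap.range φ) = m * k := by
    rw [LinearMap.finrank_range_of_inj hφinj]
    have h := Module.finrank_mul_finrank F K (Fin k → K)
    rw [Module.finrank_fin_fun, hmK] at h
    exact h.symm
  -- pointwise computation of vecMul against Psi
  have hvp : ∀ (v : Fin n → F) (x : Fin n → K),
      Matrix.vecMul v (Psi x) = 0 ↔ ∑ l, v l • x l = 0 := by
    intro v x
    have hj : ∀ j, Matrix.vecMul v (Psi x) j = b.repr (∑ l, v l • x l) j := by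
      intro j
      rw [map_sum]
      simp only [Matrix.vecMul, dotProduct, hPsi, map_smul, Finsupp.coe_finset_sum,
        Finset.sum_apply, Finsupp.smul_apply, smul_eq_mul]
    constructor
    · intro h
      have h0 : b.repr (∑ l, v l • x l) = 0 := by
        ext j
        have := hj j
        rw [h] at this
        simpa using this.symm
      exact b.repr.map_eq_zero_iff.mp h0
    · intro h
      funext j
      rw [hj j, h]
      simp
  have hsum : ∀ (i : Fin n) (x : Fin n → K),
      ∑ l, (B i) l • x l = Matrix.vecMul x (X.map (algebraMap F K)) i := by
    intro i x
    simp only [Matrix.vecMul, dotProduct, Matrix.map_apply, hX, Algebra.smul_def]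
    exact Finset.sum_congr rfl fun l _ => mul_comm _ _
  have hsub : ∀ (u : Fin k → K) (a : {x : Fin n // x ∈ A}),
      Matrix.vecMul u GA a = Matrix.vecMul u G' (a : Fin n) := by
    intro u a
    simp [hGAdef, Matrix.vecMul, dotProduct, Matrix.submatrix_apply]
  -- the key equivalence
  have hkey : ∀ u : Fin k → K,
      (φ u ∈ colspLE (dotPerp (Submodule.span F (⇑B '' ↑A))) ↔ Matrix.vecMul u GA = 0) := by
    intro u
    rw [hφu, mem_colspLE_dotPerp]
    constructor
    · intro h
      funext a
      have hBa := h (B (a : Fin n)) ⟨(a : Fin n), Finset.mem_coe.mpr a.2, rfl⟩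
      rw [hvp, hsum, Matrix.vecMul_vecMul, ← hG'] at hBa
      rw [hsub u a, hBa]
      rfl
    · intro h v hv
      obtain ⟨i, hiA, rfl⟩ := hv
      rw [hvp, hsum, Matrix.vecMul_vecMul, ← hG']
      have h2 := congrFun h ⟨i, hiA⟩
      rw [hsub] at h2
      simpa using h2
  -- the shortened code
  have hcode : codeC (LinearMap.range φ) (dotPerp (Submodule.span F (⇑B '' ↑A)))
      = Submodule.map φ ((LinearMap.ker GA.vecMulLinear).restrictScalars F) := by
    ext M
    rw [codeC, Submodule.mem_inf]
    constructor
    · rintro ⟨hMC, hcol⟩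
      obtain ⟨u, rfl⟩ := hMC
      refine ⟨u, ?_, rfl⟩
      simp only [SetLike.mem_coe, Submodule.restrictScalars_mem, LinearMap.mem_ker,
        Matrix.vecMulLinear_apply]
      exact (hkey u).1 hcol
    · rintro ⟨u, hu, rfl⟩
      simp only [SetLike.mem_coe, Submodule.restrictScalars_mem, LinearMap.mem_ker,
        Matrix.vecMulLinear_apply] at hu
      exact ⟨LinearMap.mem_range_self φ u, (hkey u).2 hu⟩
  -- dimension of the shortened code
  set d := finrank K (LinearMap.ker GA.vecMulLinear) with hd
  have hdim2 : finrank F (codeC (LinearMap.range φ)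
      (dotPerp (Submodule.span F (⇑B '' ↑A)))) = m * d := by
    rw [hcode]
    rw [← LinearEquiv.finrank_eq (Submodule.equivMapOfInjective φ hφinj
      ((LinearMap.ker GA.vecMulLinear).restrictScalars F))]
    have h1 : finrank F ((LinearMap.ker GA.vecMulLinear).restrictScalars F)
        = finrank F (LinearMap.ker GA.vecMulLinear) := rfl
    rw [h1, ← Module.finrank_mul_finrank F K (LinearMap.ker GA.vecMulLinear), hmK]
  -- rank-nullity for GA
  have hrn : GA.rank + d = k := aux_rank_nullity GA
  -- conclusion
  rw [hr A, hρ, hC]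
  unfold rhoC
  rw [hdimC, hdim2]
  rw [div_eq_iff hmQ]
  have hk : (k : ℚ) = (GA.rank : ℚ) + (d : ℚ) := by exact_mod_cast hrn.symm
  push_cast
  rw [hk]
  ring
end

section
/- Let B be a finite set with |B| = n, let k ∈ {1, …, n}, and let 𝒜 be a collection of k-element subsets of B such that |A ∩ A'| ≤ k − 2 for all distinct A, A' ∈ 𝒜. Define r: 2^B → ℕ₀ by r(X) = k − 1 if X ∈ 𝒜 and r(X) = min{|X|, k} otherwise. Then r is a matroid rank function on B, i.e., r(X) ≤ |X| for all X, r is monotone with respect to inclusion, and r(X∪Y) + r(X∩Y) ≤ r(X) + r(Y) for all X, Y ⊆ B. -/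
/-- Let `B` be a finite set with `|B| = n`, `k ∈ {1,…,n}`, and `𝒜` a
collection of `k`-subsets of `B` with pairwise intersections of size at most `k − 2`.
Then `r(X) = k − 1` for `X ∈ 𝒜` and `r(X) = min{|X|, k}` otherwise defines a matroid
rank function on `B`. -/
theorem paving_matroid_rank_function
    {B : Type} [Fintype B] [DecidableEq B] {n k : ℕ}
    (hcard : Fintype.card B = n) (hk1 : 1 ≤ k) (hkn : k ≤ n)
    (𝒜 : Set (Finset B))
    (h𝒜card : ∀ A ∈ 𝒜, A.card = k)
    (h𝒜int : ∀ A ∈ 𝒜, ∀ A' ∈ 𝒜, A ≠ A' → ((A ∩ A').card : ℤ) ≤ (k : ℤ) - 2)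
    (r : Finset B → ℕ)
    (hr𝒜 : ∀ X ∈ 𝒜, r X = k - 1)
    (hr : ∀ X ∉ 𝒜, r X = min X.card k) :
    (∀ X : Finset B, r X ≤ X.card) ∧
    (∀ X Y : Finset B, X ⊆ Y → r X ≤ r Y) ∧
    (∀ X Y : Finset B, r (X ∪ Y) + r (X ∩ Y) ≤ r X + r Y) := by
  classical
  -- upper bound: r S ≤ min |S| k, and if S ∈ 𝒜 then r S = k - 1 with |S| = k
  have key : ∀ S : Finset B, r S ≤ min S.card k ∧ min S.card k ≤ r S + 1 := by
    intro S
    by_cases h : S ∈ 𝒜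
    · rw [hr𝒜 S h]
      have hc := h𝒜card S h
      omega
    · rw [hr S h]
      omega
  refine ⟨?_, ?_, ?_⟩
  · intro X
    have := key X
    omega
  · -- monotonicity
    intro X Y hXY
    have hc : X.card ≤ Y.card := Finset.card_le_card hXY
    by_cases hX : X ∈ 𝒜 <;> by_cases hY : Y ∈ 𝒜
    · have : X = Y := Finset.eq_of_subset_of_card_le hXY
        (by rw [h𝒜card X hX, h𝒜card Y hY])
      rw [this]
    · have hx := h𝒜card X hX
      rw [hr𝒜 X hX, hr Y hY]
      omega
    · have hne : X ≠ Y := fun h => hX (h ▸ hY)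
      have hlt : X.card < Y.card := Finset.card_lt_card (hXY.ssubset_of_ne hne)
      have hy := h𝒜card Y hY
      rw [hr X hX, hr𝒜 Y hY]
      omega
    · rw [hr X hX, hr Y hY]; omega
  · -- submodularity
    -- first handle the mixed case as an auxiliary claim (to use symmetrically)
    have main : ∀ X Y : Finset B, X ∈ 𝒜 → Y ∉ 𝒜 →
        r (X ∪ Y) + r (X ∩ Y) ≤ r X + r Y := by
      intro X Y hX hY
      have hx := h𝒜card X hX
      have hrX : r X = k - 1 := hr𝒜 X hX
      have hrY : r Y = min Y.card k := hr Y hY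
      have hcards : (X ∪ Y).card + (X ∩ Y).card = X.card + Y.card :=
        Finset.card_union_add_card_inter X Y
      by_cases hu : X ∪ Y ∈ 𝒜
      · -- then X ∪ Y has card k, so X ∪ Y = X, i.e. Y ⊆ X
        have huX : X ∪ Y = X := by
          refine (Finset.eq_of_subset_of_card_le Finset.subset_union_left ?_).symm
          rw [h𝒜card _ hu, hx]
        rw [huX]
        have hiY : X ∩ Y = Y := by
          have : Y ⊆ X := Finset.union_eq_left.mp huX
          exact Finset.inter_eq_right.mpr this
        rw [hiY]
      · by_cases hi : X ∩ Y ∈ 𝒜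
        · have hic := h𝒜card _ hi
          have hri : r (X ∩ Y) = k - 1 := hr𝒜 _ hi
          have hru : r (X ∪ Y) = min (X ∪ Y).card k := hr _ hu
          have hyc : k ≤ Y.card := by
            have := Finset.card_le_card (Finset.inter_subset_right (s₁ := X) (s₂ := Y))
            omega
          rw [hru, hri, hrX, hrY]
          omega
        · have hri : r (X ∩ Y) = min (X ∩ Y).card k := hr _ hi
          have hru : r (X ∪ Y) = min (X ∪ Y).card k := hr _ hu
          by_cases hXY : X ⊆ Y
          · rw [Finset.union_eq_right.mpr hXY, Finset.inter_eq_left.mpr hXY]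
            omega
          · by_cases hYX : Y ⊆ X
            · exact absurd (by rw [Finset.union_eq_left.mpr hYX]; exact hX) hu
            · -- neither contained in the other: strict inequalities
              have h1 : (X ∩ Y).card < Y.card :=
                Finset.card_lt_card
                  ((Finset.inter_subset_right (s₁ := X) (s₂ := Y)).ssubset_of_ne
                    (fun h => hYX (Finset.inter_eq_right.mp h)))
              have h2 : X.card < (X ∪ Y).card :=
                Finset.card_lt_card
                  ((Finset.subset_union_left (s₁ := X) (s₂ := Y)).ssubset_of_ne
                    (fun h => hYX (Finset.union_eq_left.mp h.symm)))
              have h0 : (X ∩ Y).card < X.card :=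
                Finset.card_lt_card
                  ((Finset.inter_subset_left (s₁ := X) (s₂ := Y)).ssubset_of_ne
                    (fun h => hXY (Finset.inter_eq_left.mp h)))
              rw [hru, hri, hrX, hrY]
              omega
    intro X Y
    by_cases hX : X ∈ 𝒜 <;> by_cases hY : Y ∈ 𝒜
    · by_cases hXY : X = Y
      · subst hXY
        rw [Finset.union_self, Finset.inter_self]
      · have hx := h𝒜card X hX
        have hy := h𝒜card Y hY
        have hint := h𝒜int X hX Y hY hXY
        have hic : (X ∩ Y).card + 2 ≤ k := by omega
        have hcards : (X ∪ Y).card + (X ∩ Y).card = X.card + Y.card :=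
          Finset.card_union_add_card_inter X Y
        have hu : X ∪ Y ∉ 𝒜 := fun h => by
          have := h𝒜card _ h; omega
        have hi : X ∩ Y ∉ 𝒜 := fun h => by
          have := h𝒜card _ h; omega
        rw [hr𝒜 X hX, hr𝒜 Y hY, hr _ hu, hr _ hi]
        omega
    · exact main X Y hX hY
    · have := main Y X hY hX
      rw [Finset.union_comm, Finset.inter_comm]
      omega
    · have hcards : (X ∪ Y).card + (X ∩ Y).card = X.card + Y.card :=
        Finset.card_union_add_card_inter X Y
      have h1 : (X ∩ Y).card ≤ X.card :=
        Finset.card_le_card (Finset.inter_subset_left (s₁ := X) (s₂ := Y))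
      have h2 : X.card ≤ (X ∪ Y).card :=
        Finset.card_le_card (Finset.subset_union_left (s₁ := X) (s₂ := Y))
      have ku := key (X ∪ Y)
      have ki := key (X ∩ Y)
      rw [hr X hX, hr Y hY]
      omega
end

section
/- Let n ∈ ℕ, k ∈ {1, …, n}, and let 𝒮 be a collection of k-dimensional subspaces of 𝔽_q^n such that dim(V ∩ W) ≤ k − 2 for all distinct V, W ∈ 𝒮. Define ρ on subspaces of 𝔽_q^n by ρ(V) = k − 1 if V ∈ 𝒮 and ρ(V) = min{dim V, k} otherwise. Then (𝔽_q^n, ρ) is a q-matroid, i.e., ρ satisfies ρ(V) ≤ dim V for all subspaces V, is monotone with respect to inclusion, and satisfies ρ(V+W) + ρ(V∩W) ≤ ρ(V) + ρ(W) for all subspaces V, W. -/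
open Module

/-- Let `k ∈ {1,…,n}` and `𝒮` a collection of `k`-dimensional subspaces
of `𝔽_q^n` with pairwise intersections of dimension at most `k − 2`. Then
`ρ(V) = k − 1` for `V ∈ 𝒮` and `ρ(V) = min{dim V, k}` otherwise defines a `q`-matroid
on `𝔽_q^n`. -/
theorem paving_qMatroid_rank_function
    {F : Type} [Field F] [Fintype F] {n k : ℕ}
    (hk1 : 1 ≤ k) (hkn : k ≤ n)
    (𝒮 : Set (Submodule F (Fin n → F)))
    (h𝒮dim : ∀ V ∈ 𝒮, finrank F V = k)
    (h𝒮int : ∀ V ∈ 𝒮, ∀ W ∈ 𝒮, V ≠ W → ((finrank F ↥(V ⊓ W)) : ℤ) ≤ (k : ℤ) - 2)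
    (ρ : Submodule F (Fin n → F) → ℕ)
    (hρ𝒮 : ∀ V ∈ 𝒮, ρ V = k - 1)
    (hρ : ∀ (V : Submodule F (Fin n → F)), V ∉ 𝒮 → ρ V = min (finrank F V) k) :
    (∀ V : Submodule F (Fin n → F), ρ V ≤ finrank F V) ∧
    (∀ V W : Submodule F (Fin n → F), V ≤ W → ρ V ≤ ρ W) ∧
    (∀ V W : Submodule F (Fin n → F), ρ (V ⊔ W) + ρ (V ⊓ W) ≤ ρ V + ρ W) := by
  have hnot : ∀ V : Submodule F (Fin n → F), finrank F V ≠ k → V ∉ 𝒮 := by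
    intro V h hV; exact h (h𝒮dim V hV)
  have hle : ∀ V : Submodule F (Fin n → F), ρ V ≤ min (finrank F V) k := by
    intro V
    by_cases h : V ∈ 𝒮
    · rw [hρ𝒮 V h, h𝒮dim V h]; omega
    · rw [hρ V h]
  have hρk : ∀ V : Submodule F (Fin n → F), k ≤ finrank F V → V ∉ 𝒮 → ρ V = k := by
    intro V h1 h2; rw [hρ V h2]; omega
  have hρd : ∀ V : Submodule F (Fin n → F), finrank F V ≤ k → V ∉ 𝒮 → ρ V = finrank F V := by
    intro V h1 h2; rw [hρ V h2]; omega
  refine ⟨fun V => (hle V).trans (min_le_left _ _), ?_, ?_⟩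
  · intro V W hVW
    by_cases hW : W ∈ 𝒮
    · rw [hρ𝒮 W hW]
      rcases eq_or_lt_of_le hVW with rfl | hlt
      · rw [hρ𝒮 V hW]
      · have h1 := Submodule.finrank_lt_finrank_of_lt hlt
        have h2 := h𝒮dim W hW
        have hV : V ∉ 𝒮 := hnot V (by omega)
        rw [hρ V hV]; omega
    · rw [hρ W hW]
      have hmono := Submodule.finrank_mono hVW
      have := hle V
      omega
  · intro V W
    have hdim := Submodule.finrank_sup_add_finrank_inf_eq V W
    by_cases hV : V ∈ 𝒮 <;> by_cases hW : W ∈ 𝒮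
    · -- both in 𝒮
      by_cases hVW : V = W
      · subst hVW; rw [sup_idem, inf_idem]
      · have hint := h𝒮int V hV W hW hVW
        have hdV := h𝒮dim V hV
        have hdW := h𝒮dim W hW
        have hinf : V ⊓ W ∉ 𝒮 := hnot _ (by omega)
        have hsup : V ⊔ W ∉ 𝒮 := hnot _ (by omega)
        rw [hρ𝒮 V hV, hρ𝒮 W hW, hρ (V ⊓ W) hinf, hρ (V ⊔ W) hsup]
        omega
    · -- V ∈ 𝒮, W ∉ 𝒮
      by_cases hle1 : V ≤ W
      · rw [sup_eq_right.mpr hle1, inf_eq_left.mpr hle1]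
        omega
      by_cases hle2 : W ≤ V
      · rw [sup_eq_left.mpr hle2, inf_eq_right.mpr hle2]
      have h1 : V ⊓ W < V := inf_le_left.lt_of_ne fun h => hle1 (inf_eq_left.mp h)
      have h2 : V ⊓ W < W := inf_le_right.lt_of_ne fun h => hle2 (inf_eq_right.mp h)
      have h3 : V < V ⊔ W := le_sup_left.lt_of_ne fun h => hle2 (sup_eq_left.mp h.symm)
      have d1 := Submodule.finrank_lt_finrank_of_lt h1
      have d2 := Submodule.finrank_lt_finrank_of_lt h2
      have d3 := Submodule.finrank_lt_finrank_of_lt h3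
      have hdV := h𝒮dim V hV
      have hinf : V ⊓ W ∉ 𝒮 := hnot _ (by omega)
      have hsup : V ⊔ W ∉ 𝒮 := hnot _ (by omega)
      rw [hρ𝒮 V hV, hρ W hW, hρd (V ⊓ W) (by omega) hinf, hρk (V ⊔ W) (by omega) hsup]
      omega
    · -- V ∉ 𝒮, W ∈ 𝒮
      by_cases hle1 : W ≤ V
      · rw [sup_eq_left.mpr hle1, inf_eq_right.mpr hle1]
      by_cases hle2 : V ≤ W
      · rw [sup_eq_right.mpr hle2, inf_eq_left.mpr hle2]
        omega
      have h1 : V ⊓ W < W := inf_le_right.lt_of_ne fun h => hle1 (inf_eq_right.mp h)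
      have h2 : V ⊓ W < V := inf_le_left.lt_of_ne fun h => hle2 (inf_eq_left.mp h)
      have h3 : W < V ⊔ W := le_sup_right.lt_of_ne fun h => hle2 (sup_eq_right.mp h.symm)
      have d1 := Submodule.finrank_lt_finrank_of_lt h1
      have d2 := Submodule.finrank_lt_finrank_of_lt h2
      have d3 := Submodule.finrank_lt_finrank_of_lt h3
      have hdW := h𝒮dim W hW
      have hinf : V ⊓ W ∉ 𝒮 := hnot _ (by omega)
      have hsup : V ⊔ W ∉ 𝒮 := hnot _ (by omega)
      rw [hρ𝒮 W hW, hρ V hV, hρd (V ⊓ W) (by omega) hinf, hρk (V ⊔ W) (by omega) hsup]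
      omega
    · -- neither
      have hVi := Submodule.finrank_mono (inf_le_left (a := V) (b := W))
      have hWi := Submodule.finrank_mono (inf_le_right (a := V) (b := W))
      have hVs := Submodule.finrank_mono (le_sup_left (a := V) (b := W))
      have hWs := Submodule.finrank_mono (le_sup_right (a := V) (b := W))
      have l1 := hle (V ⊔ W)
      have l2 := hle (V ⊓ W)
      rw [hρ V hV, hρ W hW]
      omega
end

section
/- Let B be a basis of 𝔽_q^n, let k ∈ {1, …, n}, and let 𝒜 be a collection of k-element subsets of B with |A ∩ A'| ≤ k − 2 for all distinct A, A' ∈ 𝒜. Set 𝒮 = {⟨A⟩ : A ∈ 𝒜}, the collection of spans of the sets in 𝒜. Then dim(V ∩ W) ≤ k − 2 for all distinct V, W ∈ 𝒮, and the matroid M_{B,𝒜} = (B, r) with r(X) = k − 1 for X ∈ 𝒜 and r(X) = min{|X|, k} otherwise coincides with the matroid induced on B by the q-matroid M_{n,𝔽_q,𝒮} = (𝔽_q^n, ρ), where ρ(V) = k − 1 for V ∈ 𝒮 and ρ(V) = min{dim V, k} otherwise; that is, r(X) = ρ(⟨X⟩) for every X ⊆ B. -/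
open Module

section Aux

variable {F : Type} [Field F] {n : ℕ} (B : Basis (Fin n) F (Fin n → F))

lemma aux_span_inf (s t : Set (Fin n)) :
    Submodule.span F (⇑B '' s) ⊓ Submodule.span F (⇑B '' t)
      = Submodule.span F (⇑B '' (s ∩ t)) := by
  ext x
  simp only [Submodule.mem_inf, Basis.mem_span_image, Set.subset_inter_iff]

lemma aux_span_eq_iff (s t : Set (Fin n)) :
    Submodule.span F (⇑B '' s) = Submodule.span F (⇑B '' t) ↔ s = t := by
  constructor
  · intro h
    apply Set.eq_of_subset_of_subset
    · intro i hi
      have : B i ∈ Submodule.span F (⇑B '' t) := by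
        rw [← h]; exact Submodule.subset_span ⟨i, hi, rfl⟩
      simpa [Basis.mem_span_image, Finsupp.support_single_ne_zero] using this
    · intro i hi
      have : B i ∈ Submodule.span F (⇑B '' s) := by
        rw [h]; exact Submodule.subset_span ⟨i, hi, rfl⟩
      simpa [Basis.mem_span_image, Finsupp.support_single_ne_zero] using this
  · rintro rfl; rfl

lemma aux_finrank_span (A : Finset (Fin n)) :
    finrank F (Submodule.span F (⇑B '' ↑A)) = A.card := by
  classical
  have himg : (⇑B '' ↑A) = ↑(A.image B) := by simp
  rw [himg, finrank_span_finset_eq_card, Finset.card_image_of_injective _ B.injective]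
  have : LinearIndependent F fun x : ((⇑B '' ↑A : Set (Fin n → F))) => (x : Fin n → F) :=
    LinearIndepOn.id_image (B.linearIndependent.comp _ Subtype.coe_injective)
  rwa [himg] at this

end Aux

/-- Let `B` be a basis of `𝔽_q^n` and `𝒜` a collection of `k`-subsets of
`B` with pairwise intersections of size at most `k − 2`; set `𝒮 = {⟨A⟩ : A ∈ 𝒜}`. Then
the spaces in `𝒮` pairwise intersect in dimension at most `k − 2`, and the paving matroid
`M_{B,𝒜}` coincides with the matroid induced on `B` by the `q`-matroid `M_{n,𝔽_q,𝒮}`: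
`r(X) = ρ(⟨X⟩)` for every `X ⊆ B`. -/
theorem paving_matroid_eq_induced_matroid
    {F : Type} [Field F] [Fintype F] {n k : ℕ}
    (hk1 : 1 ≤ k) (hkn : k ≤ n)
    (B : Basis (Fin n) F (Fin n → F))
    (𝒜 : Set (Finset (Fin n)))
    (h𝒜card : ∀ A ∈ 𝒜, A.card = k)
    (h𝒜int : ∀ A ∈ 𝒜, ∀ A' ∈ 𝒜, A ≠ A' → ((A ∩ A').card : ℤ) ≤ (k : ℤ) - 2)
    (𝒮 : Set (Submodule F (Fin n → F)))
    (h𝒮 : 𝒮 = {V | ∃ A ∈ 𝒜, V = Submodule.span F (⇑B '' ↑A)})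
    (r : Finset (Fin n) → ℕ)
    (hr𝒜 : ∀ X ∈ 𝒜, r X = k - 1)
    (hr : ∀ X ∉ 𝒜, r X = min X.card k)
    (ρ : Submodule F (Fin n → F) → ℕ)
    (hρ𝒮 : ∀ V ∈ 𝒮, ρ V = k - 1)
    (hρ : ∀ (V : Submodule F (Fin n → F)), V ∉ 𝒮 → ρ V = min (finrank F V) k) :
    (∀ V ∈ 𝒮, ∀ W ∈ 𝒮, V ≠ W → ((finrank F ↥(V ⊓ W)) : ℤ) ≤ (k : ℤ) - 2) ∧
    (∀ X : Finset (Fin n), r X = ρ (Submodule.span F (⇑B '' ↑X))) := by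
  subst h𝒮
  constructor
  · rintro V ⟨A, hA, rfl⟩ W ⟨A', hA', rfl⟩ hVW
    have hAA' : A ≠ A' := by rintro rfl; exact hVW rfl
    have hinter : (⇑B '' ↑A) ∩ (⇑B '' ↑A') = ⇑B '' (↑A ∩ ↑A') := by
      exact (Set.image_inter B.injective).symm
    rw [aux_span_inf]
    have : (↑A ∩ ↑A' : Set (Fin n)) = ↑(A ∩ A') := by simp
    rw [this, aux_finrank_span]
    exact h𝒜int A hA A' hA' hAA'
  · intro X
    by_cases hX : X ∈ 𝒜
    · rw [hr𝒜 X hX, hρ𝒮 _ ⟨X, hX, rfl⟩]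
    · have hnot : Submodule.span F (⇑B '' ↑X) ∉
          {V | ∃ A ∈ 𝒜, V = Submodule.span F (⇑B '' ↑A)} := by
        rintro ⟨A, hA, hspan⟩
        have : (↑X : Set (Fin n)) = ↑A := (aux_span_eq_iff B _ _).mp hspan
        exact hX (by rwa [Finset.coe_inj.mp this])
      rw [hr X hX, hρ _ hnot, aux_finrank_span]
end

section
/- Let (E, ρ) be a q-polymatroid over a finite field 𝔽_q, let X be a subspace of E, and let π: E → E/X be the canonical projection. Define ρ_{E/X}(V) = ρ(π⁻¹(V)) − ρ(X) for every subspace V of E/X. Then ρ_{E/X} is a q-rank function on E/X; in particular it takes values in ℚ≥0 and (E/X, ρ_{E/X}) is a q-polymatroid (the contraction of X from (E, ρ)). -/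
open Module

lemma finrank_aux {F E : Type} [Field F] [AddCommGroup E] [Module F E]
    [FiniteDimensional F E] (X : Submodule F E) (V : Submodule F (E ⧸ X))
    (U' : Submodule F E) (hdisj : Disjoint X U') (hmap : U'.map X.mkQ = V) :
    finrank F U' = finrank F V := by
  let f : U' →ₗ[F] E ⧸ X := X.mkQ.comp U'.subtype
  have hker : LinearMap.ker f = ⊥ := by
    rw [eq_bot_iff]
    rintro ⟨x, hx⟩ hxf
    have : x ∈ X := by
      simpa [f, Submodule.Quotient.mk_eq_zero] using hxf
    have : x ∈ X ⊓ U' := ⟨this, hx⟩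
    simpa [Submodule.mem_bot, hdisj.eq_bot] using this
  have hrange : LinearMap.range f = V := by
    rw [← hmap]
    simp [f, LinearMap.range_comp, Submodule.range_subtype]
  have := LinearMap.finrank_range_add_finrank_ker f
  rw [hker, hrange] at this
  simpa using this.symm

/-- Let `(E, ρ)` be a `q`-polymatroid and `X ≤ E`. Then
`ρ_{E/X}(V) = ρ(π⁻¹(V)) − ρ(X)` is a `q`-rank function on `E/X`, so the contraction
`(E/X, ρ_{E/X})` is a `q`-polymatroid. -/
theorem contraction_is_qPolymatroid
    {F E : Type} [Field F] [Fintype F] [AddCommGroup E] [Module F E]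
    [FiniteDimensional F E]
    (ρ : Submodule F E → ℚ)
    (hnonneg : ∀ V : Submodule F E, 0 ≤ ρ V)
    (hR1 : ∀ V : Submodule F E, ρ V ≤ finrank F V)
    (hR2 : ∀ V W : Submodule F E, V ≤ W → ρ V ≤ ρ W)
    (hR3 : ∀ V W : Submodule F E, ρ (V ⊔ W) + ρ (V ⊓ W) ≤ ρ V + ρ W)
    (X : Submodule F E)
    (ρq : Submodule F (E ⧸ X) → ℚ)
    (hρq : ∀ V : Submodule F (E ⧸ X), ρq V = ρ (V.comap X.mkQ) - ρ X) :
    (∀ V : Submodule F (E ⧸ X), 0 ≤ ρq V) ∧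
    (∀ V : Submodule F (E ⧸ X), ρq V ≤ finrank F V) ∧
    (∀ V W : Submodule F (E ⧸ X), V ≤ W → ρq V ≤ ρq W) ∧
    (∀ V W : Submodule F (E ⧸ X), ρq (V ⊔ W) + ρq (V ⊓ W) ≤ ρq V + ρq W) := by
  refine ⟨?_, ?_, ?_, ?_⟩
  · intro V
    rw [hρq V]
    have := hR2 X (V.comap X.mkQ) (Submodule.le_comap_mkQ X V)
    linarith
  · intro V
    rw [hρq V]
    set C := V.comap X.mkQ with hCdef
    obtain ⟨U, hU⟩ := Submodule.exists_isCompl X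
    set U' := U ⊓ C with hU'def
    have hXC : X ≤ C := Submodule.le_comap_mkQ X V
    have hC : C = X ⊔ U' := by
      have := sup_inf_assoc_of_le (z := C) U hXC
      rw [hU.sup_eq_top, top_inf_eq] at this
      exact this
    have hdisj : Disjoint X U' :=
      hU.disjoint.mono_right inf_le_left
    have hmap : U'.map X.mkQ = V := by
      have h1 : C.map X.mkQ = V := Submodule.map_comap_eq_of_surjective X.mkQ_surjective V
      rw [hC, Submodule.map_sup] at h1
      have h2 : X.map X.mkQ = ⊥ := by
        rw [eq_bot_iff]
        rintro x ⟨y, hy, rfl⟩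
        simpa [Submodule.Quotient.mk_eq_zero] using hy
      rw [h2, bot_sup_eq] at h1
      exact h1
    have hfr : finrank F U' = finrank F V := finrank_aux X V U' hdisj hmap
    have h3 := hR3 X U'
    rw [← hC, hdisj.eq_bot] at h3
    have h4 := hR1 U'
    have h5 := hnonneg (⊥ : Submodule F E)
    rw [hfr] at h4
    linarith
  · intro V W hVW
    rw [hρq V, hρq W]
    have := hR2 _ _ (Submodule.comap_mono hVW : V.comap X.mkQ ≤ W.comap X.mkQ)
    linarith
  · intro V W
    rw [hρq V, hρq W, hρq (V ⊔ W), hρq (V ⊓ W)]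
    have hsup : (V ⊔ W).comap X.mkQ = V.comap X.mkQ ⊔ W.comap X.mkQ := by
      have h1 : (V.comap X.mkQ ⊔ W.comap X.mkQ).map X.mkQ = V ⊔ W := by
        rw [Submodule.map_sup, Submodule.map_comap_eq_of_surjective X.mkQ_surjective,
          Submodule.map_comap_eq_of_surjective X.mkQ_surjective]
      rw [← h1, Submodule.comap_map_mkQ, sup_eq_right.mpr
        (le_trans (Submodule.le_comap_mkQ X V) le_sup_left)]
    have hinf : (V ⊓ W).comap X.mkQ = V.comap X.mkQ ⊓ W.comap X.mkQ :=
      Submodule.comap_inf _ _ _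
    rw [hsup, hinf]
    have := hR3 (V.comap X.mkQ) (W.comap X.mkQ)
    linarith
end

section
/- Let (E, ρ) be a q-polymatroid over a finite field 𝔽_q and X ≤ E a subspace. Choose a complement Y of X (so X ⊕ Y = E), nondegenerate symmetric bilinear forms ⟨·,·⟩_X on X and ⟨·,·⟩_Y on Y, and let ⟨·,·⟩ be their orthogonal sum, a nondegenerate symmetric bilinear form on E with X^⊥ = Y. Let ρ* be the dual rank function of ρ on E with respect to ⟨·,·⟩, let ρ_{E/X}* denote the rank function of the contraction of X from (E, ρ*), i.e., (ρ*)_{E/X}(V) = ρ*(π⁻¹(V)) − ρ*(X) for V ≤ E/X, and let (ρ|_Y)* be the dual with respect to ⟨·,·⟩_Y of the restriction of ρ to Y. Let ξ: E/X → Y be the isomorphism sending v + X to the Y-component of v. Then (ρ*)_{E/X}(V) = (ρ|_Y)*(ξ(V)) for all subspaces V of E/X; in particular the dual of the deletion (M\X) is equivalent to the contraction M*/X of the dual. -/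
open Module

section Aux

variable {F E : Type} [Field F] [AddCommGroup E] [Module F E]

lemma orth_sup_aux (B : E →ₗ[F] E →ₗ[F] F) (P Q : Submodule F E) :
    LinearMap.BilinForm.orthogonal B (P ⊔ Q) =
      LinearMap.BilinForm.orthogonal B P ⊓ LinearMap.BilinForm.orthogonal B Q := by
  ext m
  simp only [LinearMap.BilinForm.mem_orthogonal_iff, Submodule.mem_inf]
  constructor
  · intro h
    exact ⟨fun n hn => h n (Submodule.mem_sup_left hn),
           fun n hn => h n (Submodule.mem_sup_right hn)⟩
  · rintro ⟨h1, h2⟩ n hn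
    obtain ⟨p, hp, q, hq, rfl⟩ := Submodule.mem_sup.mp hn
    have := congrArg₂ (· + ·) (h1 p hp) (h2 q hq)
    simpa [LinearMap.BilinForm.IsOrtho, map_add] using this

end Aux

/-- Let `(E, ρ)` be a `q`-polymatroid, `X ⊕ Y = E`, and let `B` be the
orthogonal sum of nondegenerate symmetric bilinear forms on `X` and on `Y` (so `B` is a
nondegenerate symmetric bilinear form on `E` with `X^⊥ = Y`). With `ρ*` the dual of `ρ`
w.r.t. `B`, and `ξ : E/X → Y` the canonical isomorphism, the contraction of `X` from
`(E, ρ*)` equals, via `ξ`, the dual (w.r.t. the restriction of `B` to `Y`) of the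
restriction of `ρ` to `Y`:
`(ρ*)_{E/X}(V) = (ρ|_Y)*(ξ(V))` for all `V ≤ E/X`. In particular
`(M \ X)* ≈ M*/X`. -/
theorem contraction_of_dual_eq_dual_of_deletion
    {F E : Type} [Field F] [Fintype F] [AddCommGroup E] [Module F E]
    [FiniteDimensional F E]
    (ρ : Submodule F E → ℚ)
    (hnonneg : ∀ V : Submodule F E, 0 ≤ ρ V)
    (hR1 : ∀ V : Submodule F E, ρ V ≤ finrank F V)
    (hR2 : ∀ V W : Submodule F E, V ≤ W → ρ V ≤ ρ W)
    (hR3 : ∀ V W : Submodule F E, ρ (V ⊔ W) + ρ (V ⊓ W) ≤ ρ V + ρ W)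
    (X Y : Submodule F E) (hXY : IsCompl X Y)
    (B : E →ₗ[F] E →ₗ[F] F)
    (hsymm : ∀ x y : E, B x y = B y x)
    (horth : ∀ x ∈ X, ∀ y ∈ Y, B x y = 0)
    (hndX : ∀ x ∈ X, (∀ x' ∈ X, B x x' = 0) → x = 0)
    (hndY : ∀ y ∈ Y, (∀ y' ∈ Y, B y y' = 0) → y = 0)
    (ρd : Submodule F E → ℚ)
    (hρd : ∀ V : Submodule F E,
      ρd V = (finrank F V : ℚ) + ρ (LinearMap.BilinForm.orthogonal B V) - ρ ⊤)
    (ξ : (E ⧸ X) ≃ₗ[F] Y)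
    (hξ : ξ = Submodule.quotientEquivOfIsCompl X Y hXY) :
    ∀ V : Submodule F (E ⧸ X),
      ρd (V.comap X.mkQ) - ρd X =
        (finrank F (Submodule.map (Y.subtype ∘ₗ (ξ : (E ⧸ X) →ₗ[F] Y)) V) : ℚ)
          + ρ (Y ⊓ LinearMap.BilinForm.orthogonal B
              (Submodule.map (Y.subtype ∘ₗ (ξ : (E ⧸ X) →ₗ[F] Y)) V))
          - ρ Y := by
  intro V
  set W : Submodule F E := Submodule.map (Y.subtype ∘ₗ (ξ : (E ⧸ X) →ₗ[F] Y)) V with hW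
  -- W ≤ Y
  have hWY : W ≤ Y := by
    rintro w ⟨v, _, rfl⟩
    exact (ξ v).2
  -- X^⊥ = Y
  have horthX : LinearMap.BilinForm.orthogonal B X = Y := by
    apply le_antisymm
    · intro z hz
      have hz2 : z ∈ X ⊔ Y := by rw [hXY.sup_eq_top]; trivial
      obtain ⟨x, hx, y, hy, rfl⟩ := Submodule.mem_sup.mp hz2
      have hx0 : x = 0 := by
        apply hndX x hx
        intro x' hx'
        have h1 : B x' (x + y) = 0 := hz x' hx'
        have h2 : B x' y = 0 := horth x' hx' y hy
        have : B x' x = 0 := by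
          have := h1
          rw [map_add, h2, add_zero] at this
          exact this
        rw [hsymm]; exact this
      simpa [hx0] using hy
    · intro y hy x hx
      exact horth x hx y hy
  -- comap mkQ V = X ⊔ W
  have hcomap : V.comap X.mkQ = X ⊔ W := by
    apply le_antisymm
    · intro v hv
      have hmem : X.mkQ v ∈ V := hv
      have hv2 : v ∈ X ⊔ Y := by rw [hXY.sup_eq_top]; trivial
      obtain ⟨x, hx, y, hy, rfl⟩ := Submodule.mem_sup.mp hv2
      have hq : X.mkQ (x + y) = X.mkQ y := by
        simp [map_add, (Submodule.Quotient.mk_eq_zero X).mpr hx, Submodule.mkQ_apply]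
      have hξy : ξ (X.mkQ (x + y)) = ⟨y, hy⟩ := by
        rw [hq, hξ]
        exact Submodule.quotientEquivOfIsCompl_apply_mk_coe hXY ⟨y, hy⟩
      have hyW : y ∈ W := by
        refine ⟨X.mkQ (x + y), hmem, ?_⟩
        simp only [LinearMap.coe_comp, Function.comp_apply, LinearEquiv.coe_coe,
          Submodule.subtype_apply, hξy]
      exact Submodule.mem_sup.mpr ⟨x, hx, y, hyW, rfl⟩
    · rw [sup_le_iff]
      constructor
      · intro x hx
        show X.mkQ x ∈ V
        simp [Submodule.mkQ_apply, (Submodule.Quotient.mk_eq_zero X).mpr hx]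
      · rintro w ⟨v, hv, rfl⟩
        show X.mkQ _ ∈ V
        have : X.mkQ ((Y.subtype ∘ₗ (ξ : (E ⧸ X) →ₗ[F] Y)) v) = v := by
          rw [hξ]
          exact Submodule.mk_quotientEquivOfIsCompl_apply hXY v
        rw [this]; exact hv
  -- finrank (X ⊔ W) = finrank X + finrank W
  have hdisj : Disjoint X W := hXY.disjoint.mono_right hWY
  have hrank : finrank F ↥(X ⊔ W) = finrank F X + finrank F W := by
    have := Submodule.finrank_sup_add_finrank_inf_eq X W
    rw [hdisj.eq_bot, finrank_bot, add_zero] at this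
    exact this
  -- orthogonal of sup
  have horthsup : LinearMap.BilinForm.orthogonal B (X ⊔ W) =
      Y ⊓ LinearMap.BilinForm.orthogonal B W := by
    rw [orth_sup_aux, horthX]
  rw [hρd, hρd, hcomap, hrank, horthsup, horthX]
  push_cast
  ring
end

section
/- Let (E, ρ) be a q-polymatroid over a finite field 𝔽_q with closure operator cl. Then for all subspaces V, W of E: (CL1) V ≤ cl(V); (CL2) if V ≤ W then cl(V) ≤ cl(W); (CL3) cl(cl(V)) = cl(V). -/
open Module

/-- For a `q`-polymatroid `(E, ρ)` with closure operator
`cl(V) = Σ{X : dim X = 1, ρ(V + X) = ρ(V)}`, one has (CL1) `V ≤ cl(V)`, (CL2)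
`V ≤ W → cl(V) ≤ cl(W)`, and (CL3) `cl(cl(V)) = cl(V)`. -/
theorem closure_operator_properties
    {F E : Type} [Field F] [Fintype F] [AddCommGroup E] [Module F E]
    [FiniteDimensional F E]
    (ρ : Submodule F E → ℚ)
    (hnonneg : ∀ V : Submodule F E, 0 ≤ ρ V)
    (hR1 : ∀ V : Submodule F E, ρ V ≤ finrank F V)
    (hR2 : ∀ V W : Submodule F E, V ≤ W → ρ V ≤ ρ W)
    (hR3 : ∀ V W : Submodule F E, ρ (V ⊔ W) + ρ (V ⊓ W) ≤ ρ V + ρ W)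
    (cl : Submodule F E → Submodule F E)
    (hcl : ∀ V : Submodule F E,
      cl V = sSup {X : Submodule F E | finrank F X = 1 ∧ ρ (V ⊔ X) = ρ V}) :
    (∀ V : Submodule F E, V ≤ cl V) ∧
    (∀ V W : Submodule F E, V ≤ W → cl V ≤ cl W) ∧
    (∀ V : Submodule F E, cl (cl V) = cl V) := by
  classical
  have hmem : ∀ V X : Submodule F E,
      finrank F X = 1 ∧ ρ (V ⊔ X) = ρ V → X ≤ cl V := by
    intro V X hX
    rw [hcl]
    exact le_sSup hX
  have hCL1 : ∀ V : Submodule F E, V ≤ cl V := by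
    intro V v hv
    by_cases hv0 : v = 0
    · simp [hv0]
    · have hle : Submodule.span F {v} ≤ cl V := by
        apply hmem
        refine ⟨finrank_span_singleton hv0, ?_⟩
        have : V ⊔ Submodule.span F {v} = V :=
          sup_eq_left.mpr ((Submodule.span_singleton_le_iff_mem v V).mpr hv)
        rw [this]
      exact hle (Submodule.mem_span_singleton_self v)
  have hCL2 : ∀ V W : Submodule F E, V ≤ W → cl V ≤ cl W := by
    intro V W hVW
    rw [hcl V]
    apply sSup_le
    rintro X ⟨hX1, hX2⟩
    apply hmem
    refine ⟨hX1, ?_⟩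
    have h3 := hR3 W (V ⊔ X)
    have hsup : W ⊔ (V ⊔ X) = W ⊔ X := by
      rw [← sup_assoc, sup_eq_left.mpr hVW]
    rw [hsup, hX2] at h3
    have h4 : ρ V ≤ ρ (W ⊓ (V ⊔ X)) := hR2 _ _ (le_inf hVW le_sup_left)
    have h5 : ρ W ≤ ρ (W ⊔ X) := hR2 _ _ le_sup_left
    linarith
  have hfinE : Finite E := Module.finite_of_finite F
  have hfinSub : Finite (Submodule F E) :=
    Finite.of_injective (fun V : Submodule F E => (V : Set E)) SetLike.coe_injective
  have key : ∀ (V : Submodule F E) (s : Finset (Submodule F E)),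
      (∀ X ∈ s, ρ (V ⊔ X) = ρ V) → ρ (V ⊔ s.sup id) = ρ V := by
    intro V s
    induction s using Finset.induction_on with
    | empty => intro _; simp
    | @insert x s hx ih =>
      intro h
      have h1 := ih (fun Y hY => h Y (Finset.mem_insert_of_mem hY))
      have h2 := h x (Finset.mem_insert_self _ _)
      have h3 := hR3 (V ⊔ x) (V ⊔ s.sup id)
      have hsup : (V ⊔ x) ⊔ (V ⊔ s.sup id) = V ⊔ (x ⊔ s.sup id) := by
        rw [sup_sup_sup_comm, sup_idem]
      rw [hsup, h1, h2] at h3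
      have h4 : ρ V ≤ ρ ((V ⊔ x) ⊓ (V ⊔ s.sup id)) :=
        hR2 _ _ (le_inf le_sup_left le_sup_left)
      have h5 : ρ V ≤ ρ (V ⊔ (x ⊔ s.sup id)) := hR2 _ _ le_sup_left
      simp only [Finset.sup_insert, id_eq]
      exact le_antisymm (by linarith) h5
  have hρcl : ∀ V : Submodule F E, ρ (cl V) = ρ V := by
    intro V
    have hfin : {X : Submodule F E | finrank F X = 1 ∧ ρ (V ⊔ X) = ρ V}.Finite :=
      Set.toFinite _
    have h1 := key V hfin.toFinset (fun X hX => (hfin.mem_toFinset.mp hX).2)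
    have hsup : hfin.toFinset.sup id = cl V := by
      rw [Finset.sup_id_eq_sSup, hfin.coe_toFinset, hcl V]
    rw [hsup] at h1
    rw [← h1, sup_eq_right.mpr (hCL1 V)]
  refine ⟨hCL1, hCL2, fun V => le_antisymm ?_ (hCL1 (cl V))⟩
  rw [hcl (cl V)]
  apply sSup_le
  rintro X ⟨hX1, hX2⟩
  apply hmem
  refine ⟨hX1, le_antisymm ?_ (hR2 _ _ le_sup_left)⟩
  calc ρ (V ⊔ X) ≤ ρ (cl V ⊔ X) := hR2 _ _ (sup_le_sup_right (hCL1 V) X)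
    _ = ρ (cl V) := hX2
    _ = ρ V := hρcl V
end

section
/- Let C ≤ 𝔽_q^{m×m} be a nonzero rank-metric code with column rank function ρ_c and row rank function ρ_r. Then max{dim V : V ≤ 𝔽_q^m, ρ_c(V) ≤ (dim C − 1)/m} = max{dim W : W ≤ 𝔽_q^m, ρ_r(W) ≤ (dim C − 1)/m}, and the rank distance of C satisfies d_rk(C) = m − max{dim V : V ≤ 𝔽_q^m, ρ_c(V) ≤ (dim C − 1)/m}. -/
open Module

/-- The submodule of `n × m` matrices whose row space is contained in `W`. -/
def rowspLE {F : Type} [Field F] {n m : ℕ} (W : Submodule F (Fin m → F)) :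
    Submodule F (Matrix (Fin n) (Fin m) F) where
  carrier := {M | ∀ x : Fin n → F, M.transpose.mulVec x ∈ W}
  add_mem' := by
    intro M N hM hN x
    rw [Set.mem_setOf_eq] at *
    rw [Matrix.transpose_add, Matrix.add_mulVec]
    exact W.add_mem (hM x) (hN x)
  zero_mem' := by
    intro x
    simp only [Set.mem_setOf_eq, Matrix.transpose_zero, Matrix.zero_mulVec]
    exact W.zero_mem
  smul_mem' := by
    intro c M hM x
    rw [Set.mem_setOf_eq] at *
    rw [Matrix.transpose_smul, Matrix.smul_mulVec]
    exact W.smul_mem c (hM x)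

/-- The shortening `C(W, r) = {M ∈ C : rowsp(M) ⊆ W}`. -/
def codeR {F : Type} [Field F] {n m : ℕ} (C : Submodule F (Matrix (Fin n) (Fin m) F))
    (W : Submodule F (Fin m → F)) : Submodule F (Matrix (Fin n) (Fin m) F) :=
  C ⊓ rowspLE W

/-- The row rank function `ρ_r(W) = (dim C − dim C(W^⊥, r))/n` of a rank-metric code
in `𝔽^{n×m}` (here `n = m`). -/
noncomputable def rhoR {F : Type} [Field F] {n m : ℕ}
    (C : Submodule F (Matrix (Fin n) (Fin m) F)) (W : Submodule F (Fin m → F)) : ℚ :=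
  ((Module.finrank F C : ℚ) - (Module.finrank F (codeR C (dotPerp W)) : ℚ)) / n
section Aux
variable {F : Type} [Field F] {m : ℕ}

/-- The standard dot product as a bilinear form. -/
noncomputable def dotB (F : Type) [Field F] (m : ℕ) : LinearMap.BilinForm F (Fin m → F) :=
  LinearMap.mk₂ F dotProduct
    (fun a b c => add_dotProduct a b c)
    (fun r a b => smul_dotProduct r a b)
    (fun a b c => dotProduct_add a b c)
    (fun r a b => dotProduct_smul r a b)

@[simp] lemma dotB_apply (v w : Fin m → F) : dotB F m v w = dotProduct v w := rfl

lemma dotB_isRefl : (dotB F m).IsRefl := fun x y h => by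
  simpa [dotProduct_comm] using h

lemma dotB_nondegenerate : (dotB F m).Nondegenerate := by
  constructor
  · intro x h
    funext i
    simpa [dotProduct_single] using h (Pi.single i 1)
  · intro x h
    funext i
    simpa [single_dotProduct] using h (Pi.single i 1)

lemma mem_dotPerp {V : Submodule F (Fin m → F)} {w : Fin m → F} :
    w ∈ dotPerp V ↔ ∀ v ∈ V, dotProduct v w = 0 := Iff.rfl

lemma dotPerp_eq_orthogonal (V : Submodule F (Fin m → F)) :
    dotPerp V = (dotB F m).orthogonal V := by
  ext w
  simp [mem_dotPerp, LinearMap.BilinForm.mem_orthogonal_iff, LinearMap.BilinForm.IsOrtho]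

lemma finrank_add_finrank_dotPerp (V : Submodule F (Fin m → F)) :
    finrank F V + finrank F (dotPerp V) = m := by
  rw [dotPerp_eq_orthogonal,
    LinearMap.BilinForm.finrank_add_finrank_orthogonal dotB_isRefl V,
    LinearMap.BilinForm.orthogonal_top_eq_bot dotB_nondegenerate, inf_bot_eq,
    finrank_bot, add_zero, Module.finrank_fin_fun]

lemma le_dotPerp_dotPerp (U : Submodule F (Fin m → F)) : U ≤ dotPerp (dotPerp U) := by
  intro u hu w hw
  rw [dotProduct_comm]
  exact hw u hu

end Aux

lemma one_le_finrank_iff_ne_bot {F M : Type} [Field F] [AddCommGroup M] [Module F M]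
    [FiniteDimensional F M] (S : Submodule F M) : 1 ≤ finrank F S ↔ S ≠ ⊥ := by
  rw [Nat.one_le_iff_ne_zero, ne_eq, Submodule.finrank_eq_zero]

theorem rank_distance_via_rhoC_rhoR'
    {F : Type} [Field F] [Fintype F] {m : ℕ}
    (C : Submodule F (Matrix (Fin m) (Fin m) F)) (hC : C ≠ ⊥) :
    sSup {v : ℕ | ∃ V : Submodule F (Fin m → F), finrank F V = v ∧
        rhoC C V ≤ ((finrank F C : ℚ) - 1) / m}
      = sSup {w : ℕ | ∃ W : Submodule F (Fin m → F), finrank F W = w ∧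
          rhoR C W ≤ ((finrank F C : ℚ) - 1) / m} ∧
    sInf {r : ℕ | ∃ M ∈ C, M ≠ 0 ∧ M.rank = r}
      = m - sSup {v : ℕ | ∃ V : Submodule F (Fin m → F), finrank F V = v ∧
          rhoC C V ≤ ((finrank F C : ℚ) - 1) / m} := by
  classical
  set D := {r : ℕ | ∃ M ∈ C, M ≠ 0 ∧ M.rank = r} with hD
  have hDne : D.Nonempty := by
    obtain ⟨M, hMC, hMne⟩ := (Submodule.ne_bot_iff C).mp hC
    exact ⟨M.rank, M, hMC, hMne, rfl⟩
  set d := sInf D with hd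
  obtain ⟨M0, hM0C, hM0ne, hM0rank⟩ : d ∈ D := Nat.sInf_mem hDne
  have hm : 0 < m := by
    rcases Nat.eq_zero_or_pos m with h | h
    · exact absurd (by subst h; exact Matrix.ext fun i _ => i.elim0) hM0ne
    · exact h
  have hmq : (0 : ℚ) < (m : ℚ) := by exact_mod_cast hm
  have keyC : ∀ V : Submodule F (Fin m → F),
      (rhoC C V ≤ ((finrank F C : ℚ) - 1) / m ↔
        ∃ M, M ∈ C ∧ M ≠ 0 ∧ LinearMap.range M.mulVecLin ≤ dotPerp V) := by
    intro V
    rw [rhoC, div_le_div_iff_of_pos_right hmq, sub_le_sub_iff_left, Nat.one_le_cast,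
      one_le_finrank_iff_ne_bot, Submodule.ne_bot_iff]
    constructor
    · rintro ⟨M, hM, hMne⟩
      rw [codeC, Submodule.mem_inf] at hM
      refine ⟨M, hM.1, hMne, ?_⟩
      rintro _ ⟨x, rfl⟩
      exact hM.2 x
    · rintro ⟨M, hMC, hMne, hle⟩
      exact ⟨M, Submodule.mem_inf.mpr ⟨hMC, fun x => hle ⟨x, rfl⟩⟩, hMne⟩
  have keyR : ∀ W : Submodule F (Fin m → F),
      (rhoR C W ≤ ((finrank F C : ℚ) - 1) / m ↔
        ∃ M, M ∈ C ∧ M ≠ 0 ∧ LinearMap.range M.transpose.mulVecLin ≤ dotPerp W) := by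
    intro W
    rw [rhoR, div_le_div_iff_of_pos_right hmq, sub_le_sub_iff_left, Nat.one_le_cast,
      one_le_finrank_iff_ne_bot, Submodule.ne_bot_iff]
    constructor
    · rintro ⟨M, hM, hMne⟩
      rw [codeR, Submodule.mem_inf] at hM
      refine ⟨M, hM.1, hMne, ?_⟩
      rintro _ ⟨x, rfl⟩
      exact hM.2 x
    · rintro ⟨M, hMC, hMne, hle⟩
      exact ⟨M, Submodule.mem_inf.mpr ⟨hMC, fun x => hle ⟨x, rfl⟩⟩, hMne⟩
  have ub : ∀ (N : Matrix (Fin m) (Fin m) F) (V : Submodule F (Fin m → F)),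
      d ≤ N.rank → LinearMap.range N.mulVecLin ≤ dotPerp V → finrank F V ≤ m - d := by
    intro N V hdN hle
    have h1 := finrank_add_finrank_dotPerp V
    have h2 : N.rank ≤ finrank F (dotPerp V) := by
      rw [Matrix.rank]
      exact Submodule.finrank_mono hle
    omega
  have hrank0 : finrank F (LinearMap.range M0.mulVecLin) = d := hM0rank
  have hM0t : M0.transpose.rank = d := by rw [Matrix.rank_transpose]; exact hM0rank
  have hM0tne : M0.transpose ≠ 0 := by
    intro h
    exact hM0ne (by simpa using congrArg Matrix.transpose h)
  have memC : (m - d) ∈ {v : ℕ | ∃ V : Submodule F (Fin m → F), finrank F V = v ∧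
      rhoC C V ≤ ((finrank F C : ℚ) - 1) / m} := by
    refine ⟨dotPerp (LinearMap.range M0.mulVecLin), ?_, ?_⟩
    · have := finrank_add_finrank_dotPerp (LinearMap.range M0.mulVecLin)
      omega
    · exact (keyC _).mpr ⟨M0, hM0C, hM0ne, le_dotPerp_dotPerp _⟩
  have memR : (m - d) ∈ {w : ℕ | ∃ W : Submodule F (Fin m → F), finrank F W = w ∧
      rhoR C W ≤ ((finrank F C : ℚ) - 1) / m} := by
    refine ⟨dotPerp (LinearMap.range M0.transpose.mulVecLin), ?_, ?_⟩
    · have h1 := finrank_add_finrank_dotPerp (LinearMap.range M0.transpose.mulVecLin)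
      have h2 : finrank F (LinearMap.range M0.transpose.mulVecLin) = d := hM0t
      omega
    · exact (keyR _).mpr ⟨M0, hM0C, hM0ne, le_dotPerp_dotPerp _⟩
  have ubC : ∀ x ∈ {v : ℕ | ∃ V : Submodule F (Fin m → F), finrank F V = v ∧
      rhoC C V ≤ ((finrank F C : ℚ) - 1) / m}, x ≤ m - d := by
    rintro x ⟨V, rfl, hV⟩
    obtain ⟨N, hNC, hNne, hle⟩ := (keyC V).mp hV
    exact ub N V (Nat.sInf_le ⟨N, hNC, hNne, rfl⟩) hle
  have ubR : ∀ x ∈ {w : ℕ | ∃ W : Submodule F (Fin m → F), finrank F W = w ∧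
      rhoR C W ≤ ((finrank F C : ℚ) - 1) / m}, x ≤ m - d := by
    rintro x ⟨W, rfl, hW⟩
    obtain ⟨N, hNC, hNne, hle⟩ := (keyR W).mp hW
    have hdN : d ≤ N.transpose.rank := by
      rw [Matrix.rank_transpose]
      exact Nat.sInf_le ⟨N, hNC, hNne, rfl⟩
    exact ub N.transpose W hdN hle
  have hSC : sSup {v : ℕ | ∃ V : Submodule F (Fin m → F), finrank F V = v ∧
      rhoC C V ≤ ((finrank F C : ℚ) - 1) / m} = m - d :=
    le_antisymm (csSup_le ⟨m - d, memC⟩ ubC) (le_csSup ⟨m - d, ubC⟩ memC)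
  have hSR : sSup {w : ℕ | ∃ W : Submodule F (Fin m → F), finrank F W = w ∧
      rhoR C W ≤ ((finrank F C : ℚ) - 1) / m} = m - d :=
    le_antisymm (csSup_le ⟨m - d, memR⟩ ubR) (le_csSup ⟨m - d, ubR⟩ memR)
  have hdm : d ≤ m := by
    have := M0.rank_le_card_height
    simp only [Fintype.card_fin] at this
    omega
  exact ⟨hSC.trans hSR.symm, by rw [hSC]; omega⟩

/-- For a nonzero code `C ≤ 𝔽_q^{m×m}`, the largest dimension of a
subspace `V` with `ρ_c(V) ≤ (dim C − 1)/m` equals the largest dimension of a subspace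
`W` with `ρ_r(W) ≤ (dim C − 1)/m`, and the rank distance of `C` is `m` minus this
quantity. -/
theorem rank_distance_via_rhoC_rhoR
    {F : Type} [Field F] [Fintype F] {m : ℕ}
    (C : Submodule F (Matrix (Fin m) (Fin m) F)) (hC : C ≠ ⊥) :
    sSup {v : ℕ | ∃ V : Submodule F (Fin m → F), finrank F V = v ∧
        rhoC C V ≤ ((finrank F C : ℚ) - 1) / m}
      = sSup {w : ℕ | ∃ W : Submodule F (Fin m → F), finrank F W = w ∧
          rhoR C W ≤ ((finrank F C : ℚ) - 1) / m} ∧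
    sInf {r : ℕ | ∃ M ∈ C, M ≠ 0 ∧ M.rank = r}
      = m - sSup {v : ℕ | ∃ V : Submodule F (Fin m → F), finrank F V = v ∧
          rhoC C V ≤ ((finrank F C : ℚ) - 1) / m} := by
  exact rank_distance_via_rhoC_rhoR' C hC
end
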